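/- arXiv:2112.08465 — 5 statements merged into one kernel-verified Lean document; each statement's English description precedes it below -/
import Mathlib

section
/- Let (V,⟨·,·⟩) be a 3-dimensional real inner product space and let R be an algebraic curvature tensor on V having 3-positive curvature operator of the second kind. Then the scalar curvature S of R is positive, and Ric(v,v) > S/12 for every unit vector v ∈ V. -/
open scoped RealInnerProductSpace

variable {V : Type*} [NormedAddCommGroup V] [InnerProductSpace ℝ V]

/-- `R` is an algebraic curvature tensor: antisymmetric in the first two slots,
symmetric under exchange of the first and second pairs, and satisfying the
first Bianchi identity. -/
def IsAlgCurvatureTensor (R : V →ₗ[ℝ] V →ₗ[ℝ] V →ₗ[ℝ] V →ₗ[ℝ] ℝ) : Prop :=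
  (∀ x y z w : V, R x y z w = - R y x z w) ∧
  (∀ x y z w : V, R x y z w = R z w x y) ∧
  (∀ x y z w : V, R x y z w + R y z x w + R z x y w = 0)

/-- The Ricci curvature `Ric(x,y) = Σ_j R(x,e_j,y,e_j)` with respect to an
orthonormal basis. -/
noncomputable def ricci {n : ℕ} (b : OrthonormalBasis (Fin n) ℝ V)
    (R : V →ₗ[ℝ] V →ₗ[ℝ] V →ₗ[ℝ] V →ₗ[ℝ] ℝ) (x y : V) : ℝ :=
  ∑ j, R x (b j) y (b j)

/-- The scalar curvature `S = Σ_{i,j} R_{ijij}`. -/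
noncomputable def scalarCurv {n : ℕ} (b : OrthonormalBasis (Fin n) ℝ V)
    (R : V →ₗ[ℝ] V →ₗ[ℝ] V →ₗ[ℝ] V →ₗ[ℝ] ℝ) : ℝ :=
  ∑ i, ∑ j, R (b i) (b j) (b i) (b j)

/-- `φ` is a symmetric bilinear form which is traceless with respect to the
orthonormal basis `b`. -/
def IsTracelessSymForm {n : ℕ} (b : OrthonormalBasis (Fin n) ℝ V)
    (φ : V →ₗ[ℝ] V →ₗ[ℝ] ℝ) : Prop :=
  (∀ x y : V, φ x y = φ y x) ∧ (∑ i, φ (b i) (b i) = 0)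

/-- The inner product `⟨φ,ψ⟩ = Σ_{i,j} φ(e_i,e_j) ψ(e_i,e_j)` of bilinear forms. -/
noncomputable def formInner {n : ℕ} (b : OrthonormalBasis (Fin n) ℝ V)
    (φ ψ : V →ₗ[ℝ] V →ₗ[ℝ] ℝ) : ℝ :=
  ∑ i, ∑ j, φ (b i) (b j) * ψ (b i) (b j)

/-- The curvature operator of the second kind
`R̊(φ,ψ) = Σ_{i,j,k,l} R_{ijkl} φ(e_i,e_l) ψ(e_j,e_k)`. -/
noncomputable def secondKind {n : ℕ} (b : OrthonormalBasis (Fin n) ℝ V)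
    (R : V →ₗ[ℝ] V →ₗ[ℝ] V →ₗ[ℝ] V →ₗ[ℝ] ℝ)
    (φ ψ : V →ₗ[ℝ] V →ₗ[ℝ] ℝ) : ℝ :=
  ∑ i, ∑ j, ∑ k, ∑ l,
    R (b i) (b j) (b k) (b l) * φ (b i) (b l) * ψ (b j) (b k)

/-- `R` has `k`-nonnegative curvature operator of the second kind:
`Σ_{a=1}^k R̊(φ_a,φ_a) ≥ 0` for every orthonormal `k`-tuple of traceless
symmetric bilinear forms. -/
def kNonnegSecondKind {n : ℕ} (b : OrthonormalBasis (Fin n) ℝ V)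
    (R : V →ₗ[ℝ] V →ₗ[ℝ] V →ₗ[ℝ] V →ₗ[ℝ] ℝ) (k : ℕ) : Prop :=
  ∀ φ : Fin k → (V →ₗ[ℝ] V →ₗ[ℝ] ℝ),
    (∀ a, IsTracelessSymForm b (φ a)) →
    (∀ a a', formInner b (φ a) (φ a') = if a = a' then 1 else 0) →
    0 ≤ ∑ a, secondKind b R (φ a) (φ a)

/-- `R` has `k`-positive curvature operator of the second kind:
`Σ_{a=1}^k R̊(φ_a,φ_a) > 0` for every orthonormal `k`-tuple of traceless
symmetric bilinear forms. -/
def kPosSecondKind {n : ℕ} (b : OrthonormalBasis (Fin n) ℝ V)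
    (R : V →ₗ[ℝ] V →ₗ[ℝ] V →ₗ[ℝ] V →ₗ[ℝ] ℝ) (k : ℕ) : Prop :=
  ∀ φ : Fin k → (V →ₗ[ℝ] V →ₗ[ℝ] ℝ),
    (∀ a, IsTracelessSymForm b (φ a)) →
    (∀ a a', formInner b (φ a) (φ a') = if a = a' then 1 else 0) →
    0 < ∑ a, secondKind b R (φ a) (φ a)


section Aux

variable {n : ℕ}

private lemma bilin_expand (c : OrthonormalBasis (Fin n) ℝ V) (φ : V →ₗ[ℝ] V →ₗ[ℝ] ℝ)
    (x y : V) : φ x y = ∑ p, ∑ q, ⟪c p, x⟫ * ⟪c q, y⟫ * φ (c p) (c q) := by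
  conv_lhs => rw [← c.sum_repr' x, ← c.sum_repr' y]
  simp only [map_sum, LinearMap.sum_apply, map_smul, LinearMap.smul_apply, smul_eq_mul,
    Finset.mul_sum]
  rw [Finset.sum_comm]
  refine Finset.sum_congr rfl fun p _ => ?_
  refine Finset.sum_congr rfl fun q _ => ?_
  ring

private lemma sum3_comm (f : Fin n → Fin n → Fin n → ℝ) :
    ∑ j, ∑ k, ∑ l, f j k l = ∑ l, ∑ j, ∑ k, f j k l := by
  have h : ∀ j, ∑ k, ∑ l, f j k l = ∑ l, ∑ k, f j k l := fun j => Finset.sum_comm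
  simp_rw [h]
  exact Finset.sum_comm

private lemma sum4_comm (f : Fin n → Fin n → Fin n → Fin n → ℝ) :
    ∑ i, ∑ j, ∑ p, ∑ q, f i j p q = ∑ p, ∑ q, ∑ i, ∑ j, f i j p q := by
  have h : ∀ i, ∑ j, ∑ p, ∑ q, f i j p q = ∑ p, ∑ q, ∑ j, f i j p q := by
    intro i
    rw [Finset.sum_comm]
    exact Finset.sum_congr rfl fun p _ => Finset.sum_comm
  simp_rw [h]
  rw [Finset.sum_comm]
  exact Finset.sum_congr rfl fun p _ => Finset.sum_comm

private lemma contract_indep (b c : OrthonormalBasis (Fin n) ℝ V)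
    (A B : V →ₗ[ℝ] V →ₗ[ℝ] ℝ) :
    ∑ i, ∑ j, A (b i) (b j) * B (b i) (b j) = ∑ p, ∑ q, A (c p) (c q) * B (c p) (c q) := by
  calc ∑ i, ∑ j, A (b i) (b j) * B (b i) (b j)
      = ∑ i, ∑ j, ∑ p, ∑ q, ⟪c p, b i⟫ * ⟪c q, b j⟫ * A (c p) (c q) * B (b i) (b j) := by
        refine Finset.sum_congr rfl fun i _ => Finset.sum_congr rfl fun j _ => ?_
        rw [bilin_expand c A (b i) (b j), Finset.sum_mul]
        exact Finset.sum_congr rfl fun p _ => by rw [Finset.sum_mul]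
    _ = ∑ p, ∑ q, ∑ i, ∑ j, ⟪c p, b i⟫ * ⟪c q, b j⟫ * A (c p) (c q) * B (b i) (b j) :=
        sum4_comm _
    _ = ∑ p, ∑ q, A (c p) (c q) * B (c p) (c q) := by
        refine Finset.sum_congr rfl fun p _ => Finset.sum_congr rfl fun q _ => ?_
        rw [bilin_expand b B (c p) (c q), Finset.mul_sum]
        refine Finset.sum_congr rfl fun i _ => ?_
        rw [Finset.mul_sum]
        refine Finset.sum_congr rfl fun j _ => ?_
        rw [real_inner_comm (b i) (c p), real_inner_comm (b j) (c q)]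
        ring

private lemma trace_indep (b c : OrthonormalBasis (Fin n) ℝ V) (φ : V →ₗ[ℝ] V →ₗ[ℝ] ℝ) :
    ∑ i, φ (b i) (b i) = ∑ p, φ (c p) (c p) := by
  have hc := c.orthonormal
  rw [orthonormal_iff_ite] at hc
  calc ∑ i, φ (b i) (b i)
      = ∑ i, ∑ p, ∑ q, ⟪c p, b i⟫ * ⟪c q, b i⟫ * φ (c p) (c q) :=
        Finset.sum_congr rfl fun i _ => bilin_expand c φ (b i) (b i)
    _ = ∑ p, ∑ q, ∑ i, ⟪c p, b i⟫ * ⟪c q, b i⟫ * φ (c p) (c q) := by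
        rw [Finset.sum_comm]
        exact Finset.sum_congr rfl fun p _ => Finset.sum_comm
    _ = ∑ p, ∑ q, (∑ i, ⟪c p, b i⟫ * ⟪b i, c q⟫) * φ (c p) (c q) := by
        refine Finset.sum_congr rfl fun p _ => Finset.sum_congr rfl fun q _ => ?_
        rw [Finset.sum_mul]
        refine Finset.sum_congr rfl fun i _ => ?_
        rw [real_inner_comm (b i) (c q)]
    _ = ∑ p, ∑ q, ⟪c p, c q⟫ * φ (c p) (c q) := by
        refine Finset.sum_congr rfl fun p _ => Finset.sum_congr rfl fun q _ => ?_
        rw [b.sum_inner_mul_inner]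
    _ = ∑ p, φ (c p) (c p) := by simp [hc]

/-- slice of `R` in slots 2,4 (x, z fixed) -/
private noncomputable def slice24 (R : V →ₗ[ℝ] V →ₗ[ℝ] V →ₗ[ℝ] V →ₗ[ℝ] ℝ) (x z : V) :
    V →ₗ[ℝ] V →ₗ[ℝ] ℝ :=
  LinearMap.mk₂ ℝ (fun y w => R x y z w)
    (fun y₁ y₂ w => by simp) (fun a y w => by simp)
    (fun y w₁ w₂ => by simp) (fun a y w => by simp)

/-- slice of `R` in slots 2,3 (x, w fixed) -/
private noncomputable def slice23 (R : V →ₗ[ℝ] V →ₗ[ℝ] V →ₗ[ℝ] V →ₗ[ℝ] ℝ) (x w : V) :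
    V →ₗ[ℝ] V →ₗ[ℝ] ℝ :=
  LinearMap.mk₂ ℝ (fun y z => R x y z w)
    (fun y₁ y₂ z => by simp) (fun a y z => by simp)
    (fun y z₁ z₂ => by simp) (fun a y z => by simp)

private noncomputable def ricForm (c : OrthonormalBasis (Fin n) ℝ V)
    (R : V →ₗ[ℝ] V →ₗ[ℝ] V →ₗ[ℝ] V →ₗ[ℝ] ℝ) : V →ₗ[ℝ] V →ₗ[ℝ] ℝ :=
  LinearMap.mk₂ ℝ (fun x z => ∑ j, R x (c j) z (c j))
    (fun x₁ x₂ z => by simp [Finset.sum_add_distrib])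
    (fun a x z => by simp [Finset.mul_sum])
    (fun x z₁ z₂ => by simp [Finset.sum_add_distrib])
    (fun a x z => by simp [Finset.mul_sum])

private noncomputable def gForm (c : OrthonormalBasis (Fin n) ℝ V)
    (R : V →ₗ[ℝ] V →ₗ[ℝ] V →ₗ[ℝ] V →ₗ[ℝ] ℝ) (ψ : V →ₗ[ℝ] V →ₗ[ℝ] ℝ) :
    V →ₗ[ℝ] V →ₗ[ℝ] ℝ :=
  LinearMap.mk₂ ℝ (fun x w => ∑ j, ∑ k, R x (c j) (c k) w * ψ (c j) (c k))
    (fun x₁ x₂ w => by simp [Finset.sum_add_distrib, add_mul])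
    (fun a x w => by simp [Finset.mul_sum, mul_assoc])
    (fun x w₁ w₂ => by simp [Finset.sum_add_distrib, add_mul])
    (fun a x w => by simp [Finset.mul_sum, mul_assoc])

private lemma ricci_indep (b c : OrthonormalBasis (Fin n) ℝ V)
    (R : V →ₗ[ℝ] V →ₗ[ℝ] V →ₗ[ℝ] V →ₗ[ℝ] ℝ) (x y : V) :
    ricci b R x y = ricci c R x y := by
  have := trace_indep b c (slice24 R x y)
  simpa [ricci, slice24] using this

private lemma scalar_indep (b c : OrthonormalBasis (Fin n) ℝ V)
    (R : V →ₗ[ℝ] V →ₗ[ℝ] V →ₗ[ℝ] V →ₗ[ℝ] ℝ) :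
    scalarCurv b R = scalarCurv c R := by
  have h1 : ∀ i, ∑ j, R (b i) (b j) (b i) (b j) = ricForm c R (b i) (b i) := by
    intro i
    have := trace_indep b c (slice24 R (b i) (b i))
    simpa [slice24, ricForm] using this
  calc scalarCurv b R = ∑ i, ricForm c R (b i) (b i) :=
        Finset.sum_congr rfl fun i _ => h1 i
    _ = ∑ p, ricForm c R (c p) (c p) := trace_indep b c _
    _ = scalarCurv c R := by simp [ricForm, scalarCurv]

private lemma formInner_indep (b c : OrthonormalBasis (Fin n) ℝ V)
    (φ ψ : V →ₗ[ℝ] V →ₗ[ℝ] ℝ) : formInner b φ ψ = formInner c φ ψ :=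
  contract_indep b c φ ψ

private lemma secondKind_indep (b c : OrthonormalBasis (Fin n) ℝ V)
    (R : V →ₗ[ℝ] V →ₗ[ℝ] V →ₗ[ℝ] V →ₗ[ℝ] ℝ) (φ ψ : V →ₗ[ℝ] V →ₗ[ℝ] ℝ) :
    secondKind b R φ ψ = secondKind c R φ ψ := by
  have hbc : ∀ x w : V, (∑ j, ∑ k, R x (b j) (b k) w * ψ (b j) (b k)) = gForm c R ψ x w := by
    intro x w
    have := contract_indep b c (slice23 R x w) ψ
    simpa [slice23, gForm] using this
  calc secondKind b R φ ψ
      = ∑ i, ∑ l, φ (b i) (b l) * gForm c R ψ (b i) (b l) := by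
        refine Finset.sum_congr rfl fun i _ => ?_
        rw [sum3_comm]
        refine Finset.sum_congr rfl fun l _ => ?_
        rw [← hbc (b i) (b l), Finset.mul_sum]
        refine Finset.sum_congr rfl fun j _ => ?_
        rw [Finset.mul_sum]
        refine Finset.sum_congr rfl fun k _ => ?_
        ring
    _ = ∑ p, ∑ t, φ (c p) (c t) * gForm c R ψ (c p) (c t) :=
        contract_indep b c φ (gForm c R ψ)
    _ = secondKind c R φ ψ := by
        refine Finset.sum_congr rfl fun p _ => ?_
        rw [show (∑ q, ∑ k, ∑ l,
            R (c p) (c q) (c k) (c l) * φ (c p) (c l) * ψ (c q) (c k)) =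
            ∑ l, ∑ q, ∑ k, R (c p) (c q) (c k) (c l) * φ (c p) (c l) * ψ (c q) (c k)
          from sum3_comm _]
        refine Finset.sum_congr rfl fun l _ => ?_
        simp only [gForm, LinearMap.mk₂_apply, Finset.mul_sum]
        refine Finset.sum_congr rfl fun q _ => Finset.sum_congr rfl fun k _ => ?_
        ring

private lemma kPos_indep (b c : OrthonormalBasis (Fin n) ℝ V)
    (R : V →ₗ[ℝ] V →ₗ[ℝ] V →ₗ[ℝ] V →ₗ[ℝ] ℝ) {k : ℕ}
    (h : kPosSecondKind b R k) : kPosSecondKind c R k := by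
  intro φ h1 h2
  have e : ∀ a, secondKind c R (φ a) (φ a) = secondKind b R (φ a) (φ a) :=
    fun a => (secondKind_indep b c R _ _).symm
  simp_rw [e]
  refine h φ (fun a => ⟨(h1 a).1, ?_⟩) (fun a a' => ?_)
  · rw [trace_indep b c]
    exact (h1 a).2
  · rw [formInner_indep b c]
    exact h2 a a'

end Aux


section Construct

variable {n : ℕ}

private noncomputable def mkF (c : OrthonormalBasis (Fin n) ℝ V) (M : Fin n → Fin n → ℝ) :
    V →ₗ[ℝ] V →ₗ[ℝ] ℝ :=
  LinearMap.mk₂ ℝ (fun x y => ∑ i, ∑ j, M i j * (⟪c i, x⟫ * ⟪c j, y⟫))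
    (fun x₁ x₂ y => by
      simp only [inner_add_right, mul_add, add_mul, Finset.sum_add_distrib])
    (fun a x y => by
      simp only [real_inner_smul_right, smul_eq_mul, Finset.mul_sum]
      refine Finset.sum_congr rfl fun i _ => Finset.sum_congr rfl fun j _ => by ring)
    (fun x y₁ y₂ => by
      simp only [inner_add_right, mul_add, add_mul, Finset.sum_add_distrib])
    (fun a x y => by
      simp only [real_inner_smul_right, smul_eq_mul, Finset.mul_sum]
      refine Finset.sum_congr rfl fun i _ => Finset.sum_congr rfl fun j _ => by ring)

private lemma mkF_apply (c : OrthonormalBasis (Fin n) ℝ V) (M : Fin n → Fin n → ℝ)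
    (p q : Fin n) : mkF c M (c p) (c q) = M p q := by
  have hc := orthonormal_iff_ite.mp c.orthonormal
  simp [mkF, hc, mul_ite, ite_mul, Finset.sum_ite_eq, Finset.sum_ite_eq']

private lemma mkF_symm (c : OrthonormalBasis (Fin n) ℝ V) (M : Fin n → Fin n → ℝ)
    (hM : ∀ i j, M i j = M j i) (x y : V) : mkF c M x y = mkF c M y x := by
  simp only [mkF, LinearMap.mk₂_apply]
  rw [Finset.sum_comm]
  refine Finset.sum_congr rfl fun i _ => Finset.sum_congr rfl fun j _ => ?_
  rw [hM j i]
  ring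

private lemma formInner_mkF (c : OrthonormalBasis (Fin n) ℝ V) (M N : Fin n → Fin n → ℝ) :
    formInner c (mkF c M) (mkF c N) = ∑ i, ∑ j, M i j * N i j := by
  simp [formInner, mkF_apply]

private lemma formInner_smul (c : OrthonormalBasis (Fin n) ℝ V) (a d : ℝ)
    (φ ψ : V →ₗ[ℝ] V →ₗ[ℝ] ℝ) :
    formInner c (a • φ) (d • ψ) = a * d * formInner c φ ψ := by
  simp only [formInner, LinearMap.smul_apply, smul_eq_mul, Finset.mul_sum]
  refine Finset.sum_congr rfl fun i _ => Finset.sum_congr rfl fun j _ => by ring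

private lemma secondKind_smul (c : OrthonormalBasis (Fin n) ℝ V)
    (R : V →ₗ[ℝ] V →ₗ[ℝ] V →ₗ[ℝ] V →ₗ[ℝ] ℝ) (a : ℝ) (φ : V →ₗ[ℝ] V →ₗ[ℝ] ℝ) :
    secondKind c R (a • φ) (a • φ) = (a * a) * secondKind c R φ φ := by
  simp only [secondKind, LinearMap.smul_apply, smul_eq_mul, Finset.mul_sum]
  refine Finset.sum_congr rfl fun i _ => Finset.sum_congr rfl fun j _ =>
    Finset.sum_congr rfl fun k _ => Finset.sum_congr rfl fun l _ => by ring

private lemma trace_smul (c : OrthonormalBasis (Fin n) ℝ V) (a : ℝ)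
    (φ : V →ₗ[ℝ] V →ₗ[ℝ] ℝ) :
    ∑ i, (a • φ) (c i) (c i) = a * ∑ i, φ (c i) (c i) := by
  simp only [LinearMap.smul_apply, smul_eq_mul, Finset.mul_sum]

end Construct


section Key

private def MD3 : Fin 3 → Fin 3 → ℝ := ![![-2,0,0],![0,1,0],![0,0,1]]
private def MA3 : Fin 3 → Fin 3 → ℝ := ![![0,1,0],![1,0,0],![0,0,0]]
private def MB3 : Fin 3 → Fin 3 → ℝ := ![![0,0,1],![0,0,0],![1,0,0]]

set_option maxHeartbeats 1000000 in
private lemma key (c : OrthonormalBasis (Fin 3) ℝ V)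
    (R : V →ₗ[ℝ] V →ₗ[ℝ] V →ₗ[ℝ] V →ₗ[ℝ] ℝ) (hR : IsAlgCurvatureTensor R)
    (h3 : kPosSecondKind c R 3) :
    0 < 5 * (R (c 0) (c 1) (c 0) (c 1) + R (c 0) (c 2) (c 0) (c 2))
        - R (c 1) (c 2) (c 1) (c 2) := by
  obtain ⟨ha, hp, -⟩ := hR
  have h2 : ∀ x y z w : V, R x y w z = - R x y z w := by
    intro x y z w
    rw [hp x y w z, ha w z x y, hp z w x y]
  have hxx : ∀ x z w : V, R x x z w = 0 := by
    intro x z w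
    have := ha x x z w
    linarith
  have gswap : ∀ p q : Fin 3, R (c q) (c p) (c q) (c p) = R (c p) (c q) (c p) (c q) := by
    intro p q
    rw [ha (c q) (c p) (c q) (c p), h2 (c p) (c q) (c p) (c q)]
    ring
  have grev : ∀ p q : Fin 3, R (c p) (c q) (c q) (c p) = - R (c p) (c q) (c p) (c q) :=
    fun p q => h2 (c p) (c q) (c p) (c q)
  have grev2 : ∀ p q : Fin 3, R (c q) (c p) (c p) (c q) = - R (c p) (c q) (c p) (c q) :=
    fun p q => ha (c q) (c p) (c p) (c q)
  have g1 := grev 0 1; have g2 := grev 0 2; have g3 := grev 1 2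
  have g4 := grev2 0 1; have g5 := grev2 0 2; have g6 := grev2 1 2
  have g7 := gswap 0 1; have g8 := gswap 0 2; have g9 := gswap 1 2
  have eD : secondKind c R (mkF c MD3) (mkF c MD3) =
      4 * R (c 0) (c 1) (c 0) (c 1) + 4 * R (c 0) (c 2) (c 0) (c 2)
        - 2 * R (c 1) (c 2) (c 1) (c 2) := by
    simp only [secondKind, mkF_apply, Fin.sum_univ_three, MD3]
    norm_num [hxx, g1, g2, g3, g4, g5, g6, g7, g8, g9, Matrix.vecHead, Matrix.vecTail, Function.comp, Matrix.cons_val_two]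
    ring
  have eA : secondKind c R (mkF c MA3) (mkF c MA3) = 2 * R (c 0) (c 1) (c 0) (c 1) := by
    simp only [secondKind, mkF_apply, Fin.sum_univ_three, MA3]
    norm_num [hxx, g1, g2, g3, g4, g5, g6, g7, g8, g9, Matrix.vecHead, Matrix.vecTail, Function.comp, Matrix.cons_val_two]
    ring
  have eB : secondKind c R (mkF c MB3) (mkF c MB3) = 2 * R (c 0) (c 2) (c 0) (c 2) := by
    simp only [secondKind, mkF_apply, Fin.sum_univ_three, MB3]
    norm_num [hxx, g1, g2, g3, g4, g5, g6, g7, g8, g9, Matrix.vecHead, Matrix.vecTail, Function.comp, Matrix.cons_val_two]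
    ring
  set a6 : ℝ := (Real.sqrt 6)⁻¹ with ha6
  set a2 : ℝ := (Real.sqrt 2)⁻¹ with ha2
  have h66 : a6 * a6 * 6 = 1 := by
    rw [ha6, ← mul_inv, Real.mul_self_sqrt (by norm_num : (0:ℝ) ≤ 6)]
    norm_num
  have h22 : a2 * a2 * 2 = 1 := by
    rw [ha2, ← mul_inv, Real.mul_self_sqrt (by norm_num : (0:ℝ) ≤ 2)]
    norm_num
  have p6 : a6 * a6 = 1/6 := by linarith
  have p2 : a2 * a2 = 1/2 := by linarith
  have hpos := h3 ![a6 • mkF c MD3, a2 • mkF c MA3, a2 • mkF c MB3] ?_ ?_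
  · rw [Fin.sum_univ_three] at hpos
    simp only [Fin.zero_eta, Fin.mk_one, Fin.reduceFinMk, Matrix.cons_val_zero, Matrix.cons_val_one, Matrix.head_cons,
      Matrix.cons_val_two, Matrix.tail_cons] at hpos
    rw [secondKind_smul, secondKind_smul, secondKind_smul, eD, eA, eB, p6, p2] at hpos
    linarith
  · intro a
    fin_cases a
    · refine ⟨fun x y => ?_, ?_⟩
      · simp only [Fin.zero_eta, Fin.mk_one, Fin.reduceFinMk, Matrix.cons_val_zero, LinearMap.smul_apply, smul_eq_mul]
        rw [mkF_symm c MD3 (by intro i j; fin_cases i <;> fin_cases j <;> norm_num [MD3, Matrix.vecHead, Matrix.vecTail, Function.comp])]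
      · simp only [Fin.zero_eta, Fin.mk_one, Fin.reduceFinMk, Matrix.cons_val_zero]
        rw [trace_smul]
        simp [mkF_apply, Fin.sum_univ_three, MD3, Matrix.vecHead, Matrix.vecTail, Function.comp, Matrix.cons_val_two]
        norm_num
    · refine ⟨fun x y => ?_, ?_⟩
      · simp only [Fin.zero_eta, Fin.mk_one, Fin.reduceFinMk, Matrix.cons_val_one, Matrix.cons_val_zero, Matrix.head_cons, LinearMap.smul_apply, smul_eq_mul]
        rw [mkF_symm c MA3 (by intro i j; fin_cases i <;> fin_cases j <;> norm_num [MA3, Matrix.vecHead, Matrix.vecTail, Function.comp])]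
      · simp only [Fin.zero_eta, Fin.mk_one, Fin.reduceFinMk, Matrix.cons_val_one, Matrix.cons_val_zero, Matrix.head_cons]
        rw [trace_smul]
        simp [mkF_apply, Fin.sum_univ_three, MA3, Matrix.vecHead, Matrix.vecTail, Function.comp, Matrix.cons_val_two]
    · refine ⟨fun x y => ?_, ?_⟩
      · simp only [Fin.zero_eta, Fin.mk_one, Fin.reduceFinMk, Matrix.cons_val_two, Matrix.tail_cons, Matrix.head_cons,
          LinearMap.smul_apply, smul_eq_mul]
        rw [mkF_symm c MB3 (by intro i j; fin_cases i <;> fin_cases j <;> norm_num [MB3, Matrix.vecHead, Matrix.vecTail, Function.comp])]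
      · simp only [Fin.zero_eta, Fin.mk_one, Fin.reduceFinMk, Matrix.cons_val_two, Matrix.tail_cons, Matrix.head_cons]
        rw [trace_smul]
        simp [mkF_apply, Fin.sum_univ_three, MB3, Matrix.vecHead, Matrix.vecTail, Function.comp, Matrix.cons_val_two]
  · have vDD : (∑ i, ∑ j, MD3 i j * MD3 i j) = 6 := by
      norm_num [Fin.sum_univ_three, MD3, Matrix.vecHead, Matrix.vecTail, Function.comp, Matrix.cons_val_two]
    have vAA : (∑ i, ∑ j, MA3 i j * MA3 i j) = 2 := by
      norm_num [Fin.sum_univ_three, MA3, Matrix.vecHead, Matrix.vecTail, Function.comp, Matrix.cons_val_two]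
    have vBB : (∑ i, ∑ j, MB3 i j * MB3 i j) = 2 := by
      norm_num [Fin.sum_univ_three, MB3, Matrix.vecHead, Matrix.vecTail, Function.comp, Matrix.cons_val_two]
    have vDA : (∑ i, ∑ j, MD3 i j * MA3 i j) = 0 := by
      norm_num [Fin.sum_univ_three, MD3, MA3, Matrix.vecHead, Matrix.vecTail, Function.comp, Matrix.cons_val_two]
    have vAD : (∑ i, ∑ j, MA3 i j * MD3 i j) = 0 := by
      norm_num [Fin.sum_univ_three, MD3, MA3, Matrix.vecHead, Matrix.vecTail, Function.comp, Matrix.cons_val_two]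
    have vDB : (∑ i, ∑ j, MD3 i j * MB3 i j) = 0 := by
      norm_num [Fin.sum_univ_three, MD3, MB3, Matrix.vecHead, Matrix.vecTail, Function.comp, Matrix.cons_val_two]
    have vBD : (∑ i, ∑ j, MB3 i j * MD3 i j) = 0 := by
      norm_num [Fin.sum_univ_three, MD3, MB3, Matrix.vecHead, Matrix.vecTail, Function.comp, Matrix.cons_val_two]
    have vAB : (∑ i, ∑ j, MA3 i j * MB3 i j) = 0 := by
      norm_num [Fin.sum_univ_three, MA3, MB3, Matrix.vecHead, Matrix.vecTail, Function.comp, Matrix.cons_val_two]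
    have vBA : (∑ i, ∑ j, MB3 i j * MA3 i j) = 0 := by
      norm_num [Fin.sum_univ_three, MA3, MB3, Matrix.vecHead, Matrix.vecTail, Function.comp, Matrix.cons_val_two]
    intro a a'
    fin_cases a <;> fin_cases a' <;>
      simp only [Fin.zero_eta, Fin.mk_one, Fin.reduceFinMk, Matrix.cons_val_zero,
        Matrix.cons_val_one, Matrix.head_cons, Matrix.cons_val_two, Matrix.tail_cons] <;>
      rw [formInner_smul, formInner_mkF] <;>
      simp only [vDD, vAA, vBB, vDA, vAD, vDB, vBD, vAB, vBA, mul_zero] <;>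
      first
        | exact h66
        | exact h22
        | (rw [if_neg (by decide)])

end Key

theorem stmt_0
    (b : OrthonormalBasis (Fin 3) ℝ V)
    (R : V →ₗ[ℝ] V →ₗ[ℝ] V →ₗ[ℝ] V →ₗ[ℝ] ℝ)
    (hR : IsAlgCurvatureTensor R)
    (h3 : kPosSecondKind b R 3) :
    0 < scalarCurv b R ∧
      ∀ v : V, ‖v‖ = 1 → scalarCurv b R / 12 < ricci b R v v := by
  have K : ∀ c : OrthonormalBasis (Fin 3) ℝ V,
      0 < 5 * (R (c 0) (c 1) (c 0) (c 1) + R (c 0) (c 2) (c 0) (c 2))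
        - R (c 1) (c 2) (c 1) (c 2) :=
    fun c => key c R hR (kPos_indep b c R h3)
  have h2 : ∀ x y z w : V, R x y w z = - R x y z w := by
    intro x y z w
    rw [hR.2.1 x y w z, hR.1 w z x y, hR.2.1 z w x y]
  have hxx : ∀ x z w : V, R x x z w = 0 := by
    intro x z w
    have := hR.1 x x z w
    linarith
  have gswap : ∀ x y : V, R y x y x = R x y x y := by
    intro x y
    rw [hR.1 y x y x, h2 x y x y]
    ring
  have hS : ∀ c : OrthonormalBasis (Fin 3) ℝ V, scalarCurv c R =
      2 * (R (c 0) (c 1) (c 0) (c 1) + R (c 0) (c 2) (c 0) (c 2)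
        + R (c 1) (c 2) (c 1) (c 2)) := by
    intro c
    simp only [scalarCurv, Fin.sum_univ_three]
    rw [hxx (c 0), hxx (c 1), hxx (c 2), gswap (c 0) (c 1), gswap (c 0) (c 2),
      gswap (c 1) (c 2)]
    ring
  constructor
  · have K0 := K b
    have K1 := K (b.reindex (Equiv.swap 0 1))
    have K2 := K (b.reindex (Equiv.swap 0 2))
    simp only [OrthonormalBasis.reindex_apply, Equiv.symm_swap] at K1 K2
    simp [Equiv.swap_apply_def] at K1 K2
    rw [gswap (b 0) (b 1)] at K1
    rw [gswap (b 1) (b 2), gswap (b 0) (b 2), gswap (b 0) (b 1)] at K2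
    rw [hS b]
    linarith
  · intro v hv
    have hfin : Module.finrank ℝ V = 3 := by
      rw [Module.finrank_eq_card_basis b.toBasis, Fintype.card_fin]
    have hsub : ∀ (i j : ({0} : Set (Fin 3))), i = j := by
      intro i j
      have hi : (i : Fin 3) = 0 := Set.mem_singleton_iff.mp i.2
      have hj : (j : Fin 3) = 0 := Set.mem_singleton_iff.mp j.2
      exact Subtype.ext (hi.trans hj.symm)
    have horth : Orthonormal ℝ (({0} : Set (Fin 3)).restrict (fun _ : Fin 3 => v)) := by
      constructor
      · intro i
        exact hv
      · intro i j hij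
        exact absurd (hsub i j) hij
    have : FiniteDimensional ℝ V := Module.Finite.of_basis b.toBasis
    obtain ⟨c, hc⟩ := horth.exists_orthonormalBasis_extension_of_card_eq
      (by rw [hfin, Fintype.card_fin])
    have hc0 : c 0 = v := hc 0 rfl
    have KC := K c
    have hric : ricci b R v v
        = R (c 0) (c 1) (c 0) (c 1) + R (c 0) (c 2) (c 0) (c 2) := by
      rw [ricci_indep b c, show v = c 0 from hc0.symm]
      simp only [ricci, Fin.sum_univ_three]
      rw [hxx (c 0)]
      ring
    rw [hric, scalar_indep b c R, hS c]
    linarith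
end

section
/- Let (V,⟨·,·⟩) be a real inner product space of dimension n ≥ 4 and let R be an algebraic curvature tensor on V having 2-positive curvature operator of the second kind. Then R has positive sectional curvature, i.e. R(x,y,x,y) > 0 for every pair of orthonormal vectors x,y ∈ V. -/
open scoped RealInnerProductSpace

variable {V : Type*} [NormedAddCommGroup V] [InnerProductSpace ℝ V]

noncomputable def op (u v : V) : V →ₗ[ℝ] V →ₗ[ℝ] ℝ :=
  LinearMap.smulRight (innerₛₗ ℝ u) (innerₛₗ ℝ v)

@[simp] lemma op_apply (u v a c : V) : op u v a c = ⟪u, a⟫ * ⟪v, c⟫ := by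
  simp [op]

lemma contr {n : ℕ} (b : OrthonormalBasis (Fin n) ℝ V) (f : V →ₗ[ℝ] ℝ) (v : V) :
    ∑ i, ⟪v, b i⟫ * f (b i) = f v := by
  conv_rhs => rw [← b.sum_repr v]
  rw [map_sum]
  refine Finset.sum_congr rfl fun i _ => ?_
  rw [map_smul, b.repr_apply_apply, smul_eq_mul, real_inner_comm]

lemma SK_op {n : ℕ} (b : OrthonormalBasis (Fin n) ℝ V)
    (R : V →ₗ[ℝ] V →ₗ[ℝ] V →ₗ[ℝ] V →ₗ[ℝ] ℝ) (u v w z : V) :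
    (∑ i, ∑ j, ∑ k, ∑ l,
      R (b i) (b j) (b k) (b l) * (op u v (b i) (b l)) * (op w z (b j) (b k)))
      = R u w z v := by
  have hl : ∀ i j k : Fin n,
      (∑ l, R (b i) (b j) (b k) (b l) * (op u v (b i) (b l)) * (op w z (b j) (b k)))
      = ⟪u, b i⟫ * ⟪w, b j⟫ * ⟪z, b k⟫ * R (b i) (b j) (b k) v := by
    intro i j k
    rw [← contr b (R (b i) (b j) (b k)) v, Finset.mul_sum]
    exact Finset.sum_congr rfl fun l _ => by simp; ring
  have hk : ∀ i j : Fin n,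
      (∑ k, ⟪u, b i⟫ * ⟪w, b j⟫ * ⟪z, b k⟫ * R (b i) (b j) (b k) v)
      = ⟪u, b i⟫ * ⟪w, b j⟫ * R (b i) (b j) z v := by
    intro i j
    have hc := contr b ((LinearMap.applyₗ v).comp (R (b i) (b j))) z
    simp only [LinearMap.coe_comp, Function.comp_apply, LinearMap.applyₗ_apply_apply] at hc
    rw [← hc, Finset.mul_sum]
    exact Finset.sum_congr rfl fun k _ => by ring
  have hj : ∀ i : Fin n,
      (∑ j, ⟪u, b i⟫ * ⟪w, b j⟫ * R (b i) (b j) z v)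
      = ⟪u, b i⟫ * R (b i) w z v := by
    intro i
    have hc := contr b ((LinearMap.applyₗ v).comp ((LinearMap.applyₗ z).comp (R (b i)))) w
    simp only [LinearMap.coe_comp, Function.comp_apply, LinearMap.applyₗ_apply_apply] at hc
    rw [← hc, Finset.mul_sum]
    exact Finset.sum_congr rfl fun j _ => by ring
  have hi :
      (∑ i, ⟪u, b i⟫ * R (b i) w z v) = R u w z v := by
    have hc := contr b ((LinearMap.applyₗ v).comp ((LinearMap.applyₗ z).comp
      ((LinearMap.applyₗ w).comp R))) u
    simp only [LinearMap.coe_comp, Function.comp_apply, LinearMap.applyₗ_apply_apply] at hc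
    exact hc
  calc _ = ∑ i, ∑ j, ∑ k, ⟪u, b i⟫ * ⟪w, b j⟫ * ⟪z, b k⟫ * R (b i) (b j) (b k) v :=
        Finset.sum_congr rfl fun i _ => Finset.sum_congr rfl fun j _ =>
          Finset.sum_congr rfl fun k _ => hl i j k
    _ = ∑ i, ∑ j, ⟪u, b i⟫ * ⟪w, b j⟫ * R (b i) (b j) z v :=
        Finset.sum_congr rfl fun i _ => Finset.sum_congr rfl fun j _ => hk i j
    _ = ∑ i, ⟪u, b i⟫ * R (b i) w z v := Finset.sum_congr rfl fun i _ => hj i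
    _ = R u w z v := hi

lemma FI_op {n : ℕ} (b : OrthonormalBasis (Fin n) ℝ V) (u v w z : V) :
    (∑ i, ∑ j, (op u v (b i) (b j)) * (op w z (b i) (b j))) = ⟪u, w⟫ * ⟪v, z⟫ := by
  have hj : ∀ i : Fin n, (∑ j, (op u v (b i) (b j)) * (op w z (b i) (b j)))
      = ⟪u, b i⟫ * ⟪w, b i⟫ * ⟪v, z⟫ := by
    intro i
    have := b.sum_inner_mul_inner v z
    calc (∑ j, (op u v (b i) (b j)) * (op w z (b i) (b j)))
        = ⟪u, b i⟫ * ⟪w, b i⟫ * ∑ j, ⟪v, b j⟫ * ⟪b j, z⟫ := by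
          rw [Finset.mul_sum]
          exact Finset.sum_congr rfl fun j _ => by
            simp [real_inner_comm (b j) z]; ring
      _ = ⟪u, b i⟫ * ⟪w, b i⟫ * ⟪v, z⟫ := by rw [this]
  calc (∑ i, ∑ j, (op u v (b i) (b j)) * (op w z (b i) (b j)))
      = ∑ i, ⟪u, b i⟫ * ⟪w, b i⟫ * ⟪v, z⟫ := Finset.sum_congr rfl fun i _ => hj i
    _ = (∑ i, ⟪u, b i⟫ * ⟪b i, w⟫) * ⟪v, z⟫ := by
        rw [Finset.sum_mul]
        exact Finset.sum_congr rfl fun i _ => by rw [real_inner_comm (b i) w]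
    _ = ⟪u, w⟫ * ⟪v, z⟫ := by rw [b.sum_inner_mul_inner]

lemma trace_op {n : ℕ} (b : OrthonormalBasis (Fin n) ℝ V) (u v : V) :
    (∑ i, op u v (b i) (b i)) = ⟪u, v⟫ := by
  rw [← b.sum_inner_mul_inner u v]
  exact Finset.sum_congr rfl fun i _ => by simp [real_inner_comm (b i) v]

section Bilin
variable {n : ℕ} (b : OrthonormalBasis (Fin n) ℝ V)
    (R : V →ₗ[ℝ] V →ₗ[ℝ] V →ₗ[ℝ] V →ₗ[ℝ] ℝ)

noncomputable def SK (φ ψ : V →ₗ[ℝ] V →ₗ[ℝ] ℝ) : ℝ :=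
  ∑ i, ∑ j, ∑ k, ∑ l,
    R (b i) (b j) (b k) (b l) * φ (b i) (b l) * ψ (b j) (b k)

lemma SK_add_left (φ φ' ψ) : SK b R (φ + φ') ψ = SK b R φ ψ + SK b R φ' ψ := by
  unfold SK
  simp only [LinearMap.add_apply, ← Finset.sum_add_distrib]
  exact Finset.sum_congr rfl fun i _ => Finset.sum_congr rfl fun j _ =>
    Finset.sum_congr rfl fun k _ => Finset.sum_congr rfl fun l _ => by ring

lemma SK_sub_left (φ φ' ψ) : SK b R (φ - φ') ψ = SK b R φ ψ - SK b R φ' ψ := by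
  unfold SK
  simp only [LinearMap.sub_apply, ← Finset.sum_sub_distrib]
  exact Finset.sum_congr rfl fun i _ => Finset.sum_congr rfl fun j _ =>
    Finset.sum_congr rfl fun k _ => Finset.sum_congr rfl fun l _ => by ring

lemma SK_add_right (φ ψ ψ') : SK b R φ (ψ + ψ') = SK b R φ ψ + SK b R φ ψ' := by
  unfold SK
  simp only [LinearMap.add_apply, ← Finset.sum_add_distrib]
  exact Finset.sum_congr rfl fun i _ => Finset.sum_congr rfl fun j _ =>
    Finset.sum_congr rfl fun k _ => Finset.sum_congr rfl fun l _ => by ring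

lemma SK_sub_right (φ ψ ψ') : SK b R φ (ψ - ψ') = SK b R φ ψ - SK b R φ ψ' := by
  unfold SK
  simp only [LinearMap.sub_apply, ← Finset.sum_sub_distrib]
  exact Finset.sum_congr rfl fun i _ => Finset.sum_congr rfl fun j _ =>
    Finset.sum_congr rfl fun k _ => Finset.sum_congr rfl fun l _ => by ring

lemma SK_smul_left (c : ℝ) (φ ψ) : SK b R (c • φ) ψ = c * SK b R φ ψ := by
  unfold SK
  simp only [Finset.mul_sum]
  exact Finset.sum_congr rfl fun i _ => Finset.sum_congr rfl fun j _ =>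
    Finset.sum_congr rfl fun k _ => Finset.sum_congr rfl fun l _ => by
      simp only [LinearMap.smul_apply, smul_eq_mul]; ring

lemma SK_smul_right (c : ℝ) (φ ψ) : SK b R φ (c • ψ) = c * SK b R φ ψ := by
  unfold SK
  simp only [Finset.mul_sum]
  exact Finset.sum_congr rfl fun i _ => Finset.sum_congr rfl fun j _ =>
    Finset.sum_congr rfl fun k _ => Finset.sum_congr rfl fun l _ => by
      simp only [LinearMap.smul_apply, smul_eq_mul]; ring

noncomputable def FI (φ ψ : V →ₗ[ℝ] V →ₗ[ℝ] ℝ) : ℝ :=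
  ∑ i, ∑ j, φ (b i) (b j) * ψ (b i) (b j)

lemma FI_add_left (φ φ' ψ) : FI b (φ + φ') ψ = FI b φ ψ + FI b φ' ψ := by
  unfold FI
  simp only [LinearMap.add_apply, ← Finset.sum_add_distrib]
  exact Finset.sum_congr rfl fun i _ => Finset.sum_congr rfl fun j _ => by ring

lemma FI_sub_left (φ φ' ψ) : FI b (φ - φ') ψ = FI b φ ψ - FI b φ' ψ := by
  unfold FI
  simp only [LinearMap.sub_apply, ← Finset.sum_sub_distrib]
  exact Finset.sum_congr rfl fun i _ => Finset.sum_congr rfl fun j _ => by ring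

lemma FI_add_right (φ ψ ψ') : FI b φ (ψ + ψ') = FI b φ ψ + FI b φ ψ' := by
  unfold FI
  simp only [LinearMap.add_apply, ← Finset.sum_add_distrib]
  exact Finset.sum_congr rfl fun i _ => Finset.sum_congr rfl fun j _ => by ring

lemma FI_sub_right (φ ψ ψ') : FI b φ (ψ - ψ') = FI b φ ψ - FI b φ ψ' := by
  unfold FI
  simp only [LinearMap.sub_apply, ← Finset.sum_sub_distrib]
  exact Finset.sum_congr rfl fun i _ => Finset.sum_congr rfl fun j _ => by ring

lemma FI_smul_left (c : ℝ) (φ ψ) : FI b (c • φ) ψ = c * FI b φ ψ := by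
  unfold FI
  simp only [Finset.mul_sum]
  exact Finset.sum_congr rfl fun i _ => Finset.sum_congr rfl fun j _ => by
    simp only [LinearMap.smul_apply, smul_eq_mul]; ring

lemma FI_smul_right (c : ℝ) (φ ψ) : FI b φ (c • ψ) = c * FI b φ ψ := by
  unfold FI
  simp only [Finset.mul_sum]
  exact Finset.sum_congr rfl fun i _ => Finset.sum_congr rfl fun j _ => by
    simp only [LinearMap.smul_apply, smul_eq_mul]; ring

lemma SK_op' (u v w z : V) : SK b R (op u v) (op w z) = R u w z v := SK_op b R u v w z

lemma FI_op' (u v w z : V) : FI b (op u v) (op w z) = ⟪u, w⟫ * ⟪v, z⟫ := FI_op b u v w z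

end Bilin



lemma pair_pos {n : ℕ} (b : OrthonormalBasis (Fin n) ℝ V)
    (R : V →ₗ[ℝ] V →ₗ[ℝ] V →ₗ[ℝ] V →ₗ[ℝ] ℝ)
    (h2 : ∀ φ : Fin 2 → (V →ₗ[ℝ] V →ₗ[ℝ] ℝ),
      (∀ a, (∀ x y : V, φ a x y = φ a y x) ∧ (∑ i, φ a (b i) (b i) = 0)) →
      (∀ a a', FI b (φ a) (φ a') = if a = a' then 1 else 0) →
      0 < ∑ a, SK b R (φ a) (φ a))
    (φ₁ φ₂ : V →ₗ[ℝ] V →ₗ[ℝ] ℝ)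
    (hs1 : ∀ x y : V, φ₁ x y = φ₁ y x) (ht1 : ∑ i, φ₁ (b i) (b i) = 0)
    (hs2 : ∀ x y : V, φ₂ x y = φ₂ y x) (ht2 : ∑ i, φ₂ (b i) (b i) = 0)
    (f11 : FI b φ₁ φ₁ = 1) (f12 : FI b φ₁ φ₂ = 0)
    (f21 : FI b φ₂ φ₁ = 0) (f22 : FI b φ₂ φ₂ = 1) :
    0 < SK b R φ₁ φ₁ + SK b R φ₂ φ₂ := by
  have := h2 ![φ₁, φ₂] ?_ ?_
  · rwa [Fin.sum_univ_two] at this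
  · rw [Fin.forall_fin_two]
    exact ⟨⟨hs1, ht1⟩, ⟨hs2, ht2⟩⟩
  · rw [Fin.forall_fin_two]
    constructor <;> rw [Fin.forall_fin_two] <;>
      simp only [Matrix.cons_val_zero, Matrix.cons_val_one, Matrix.head_cons]
    · exact ⟨by rw [f11]; norm_num, by rw [f12]; norm_num⟩
    · exact ⟨by rw [f21]; norm_num, by rw [f22]; norm_num⟩

theorem aux_stmt_3 {n : ℕ} (hn : 4 ≤ n)
    (b : OrthonormalBasis (Fin n) ℝ V)
    (R : V →ₗ[ℝ] V →ₗ[ℝ] V →ₗ[ℝ] V →ₗ[ℝ] ℝ)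
    (hR : (∀ x y z w : V, R x y z w = - R y x z w) ∧
      (∀ x y z w : V, R x y z w = R z w x y) ∧
      (∀ x y z w : V, R x y z w + R y z x w + R z x y w = 0))
    (h2 : ∀ φ : Fin 2 → (V →ₗ[ℝ] V →ₗ[ℝ] ℝ),
      (∀ a, (∀ x y : V, φ a x y = φ a y x) ∧ (∑ i, φ a (b i) (b i) = 0)) →
      (∀ a a', FI b (φ a) (φ a') = if a = a' then 1 else 0) →
      0 < ∑ a, SK b R (φ a) (φ a)) :
    ∀ x y : V, ‖x‖ = 1 → ‖y‖ = 1 → ⟪x, y⟫ = 0 → 0 < R x y x y := by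
  obtain ⟨h1, hpair, _⟩ := hR
  have h4 : ∀ x y z w : V, R x y z w = - R x y w z := by
    intro x y z w
    rw [hpair x y z w, h1 z w x y, hpair w z x y]
  have hdiag1 : ∀ x z w : V, R x x z w = 0 := by
    intro x z w
    have := h1 x x z w
    linarith
  intro x y hx hy hxy
  have hyx : ⟪y, x⟫ = 0 := by rw [real_inner_comm]; exact hxy
  have hxx : ⟪x, x⟫ = (1 : ℝ) := by
    rw [real_inner_self_eq_norm_mul_norm, hx]; norm_num
  have hyy : ⟪y, y⟫ = (1 : ℝ) := by
    rw [real_inner_self_eq_norm_mul_norm, hy]; norm_num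
  have hc2 : (Real.sqrt 2)⁻¹ * (Real.sqrt 2)⁻¹ = 1 / 2 := by
    rw [← mul_inv, Real.mul_self_sqrt (by norm_num : (0:ℝ) ≤ 2)]
    norm_num
  have key := pair_pos b R h2
    ((Real.sqrt 2)⁻¹ • (op x x - op y y)) ((Real.sqrt 2)⁻¹ • (op x y + op y x))
    (by intro u v
        simp only [LinearMap.smul_apply, LinearMap.sub_apply, op_apply, smul_eq_mul]
        ring)
    (by simp only [LinearMap.smul_apply, LinearMap.sub_apply, smul_eq_mul,
          ← Finset.mul_sum, Finset.sum_sub_distrib, trace_op, hxx, hyy]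
        ring)
    (by intro u v
        simp only [LinearMap.smul_apply, LinearMap.add_apply, op_apply, smul_eq_mul]
        ring)
    (by simp only [LinearMap.smul_apply, LinearMap.add_apply, smul_eq_mul,
          ← Finset.mul_sum, Finset.sum_add_distrib, trace_op, hxy, hyx]
        ring)
    (by rw [FI_smul_left, FI_smul_right, FI_sub_left, FI_sub_right, FI_sub_right,
          FI_op', FI_op', FI_op', FI_op', hxx, hyy, hxy, hyx]
        nlinarith [hc2])
    (by rw [FI_smul_left, FI_smul_right, FI_sub_left, FI_add_right, FI_add_right,
          FI_op', FI_op', FI_op', FI_op', hxx, hyy, hxy, hyx]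
        ring)
    (by rw [FI_smul_left, FI_smul_right, FI_add_left, FI_sub_right, FI_sub_right,
          FI_op', FI_op', FI_op', FI_op', hxx, hyy, hxy, hyx]
        ring)
    (by rw [FI_smul_left, FI_smul_right, FI_add_left, FI_add_right, FI_add_right,
          FI_op', FI_op', FI_op', FI_op', hxx, hyy, hxy, hyx]
        nlinarith [hc2])
  have e0 : SK b R ((Real.sqrt 2)⁻¹ • (op x x - op y y))
      ((Real.sqrt 2)⁻¹ • (op x x - op y y)) = R x y x y := by
    rw [SK_smul_left, SK_smul_right, SK_sub_left, SK_sub_right, SK_sub_right,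
      SK_op', SK_op', SK_op', SK_op']
    have r1 : R x x x x = 0 := hdiag1 x x x
    have r2 : R y y y y = 0 := hdiag1 y y y
    have r3 : R x y y x = - R x y x y := h4 x y y x
    have r4 : R y x x y = - R x y x y := h1 y x x y
    rw [r1, r2, r3, r4, ← mul_assoc, hc2]
    ring
  have e1 : SK b R ((Real.sqrt 2)⁻¹ • (op x y + op y x))
      ((Real.sqrt 2)⁻¹ • (op x y + op y x)) = R x y x y := by
    rw [SK_smul_left, SK_smul_right, SK_add_left, SK_add_right, SK_add_right,
      SK_op', SK_op', SK_op', SK_op']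
    have r1 : R x x y y = 0 := hdiag1 x y y
    have r2 : R y y x x = 0 := hdiag1 y x x
    have r3 : R y x y x = R x y x y := by
      rw [h1 y x y x, h4 x y y x]; ring
    rw [r1, r2, r3, ← mul_assoc, hc2]
    ring
  rw [e0, e1] at key
  linarith


theorem stmt_3 {n : ℕ} (hn : 4 ≤ n)
    (b : OrthonormalBasis (Fin n) ℝ V)
    (R : V →ₗ[ℝ] V →ₗ[ℝ] V →ₗ[ℝ] V →ₗ[ℝ] ℝ)
    (hR : IsAlgCurvatureTensor R)
    (h2 : kPosSecondKind b R 2) :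
    ∀ x y : V, ‖x‖ = 1 → ‖y‖ = 1 → ⟪x, y⟫ = 0 → 0 < R x y x y := by
  exact aux_stmt_3 hn b R hR h2
end

section
/- Let (V,⟨·,·⟩) be a real inner product space of dimension n ≥ 4 and let R be an algebraic curvature tensor on V having 2-nonnegative curvature operator of the second kind. Then R has nonnegative sectional curvature, i.e. R(x,y,x,y) ≥ 0 for every pair of orthonormal vectors x,y ∈ V. -/
open scoped RealInnerProductSpace

variable {V : Type*} [NormedAddCommGroup V] [InnerProductSpace ℝ V]

noncomputable def outerForm (x y : V) : V →ₗ[ℝ] V →ₗ[ℝ] ℝ :=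
  LinearMap.mk₂ ℝ (fun u v => ⟪x, u⟫ * ⟪y, v⟫)
    (fun a a' v => by simp [inner_add_right, add_mul])
    (fun c a v => by simp [inner_smul_right]; ring)
    (fun a v v' => by simp [inner_add_right, mul_add])
    (fun c a v => by simp [inner_smul_right]; ring)

@[simp] lemma outerForm_apply (x y u v : V) : outerForm x y u v = ⟪x, u⟫ * ⟪y, v⟫ := rfl

lemma sum_repr_mul {n : ℕ} (b : OrthonormalBasis (Fin n) ℝ V) (f : V →ₗ[ℝ] ℝ) (a : V) :
    ∑ i, ⟪a, b i⟫ * f (b i) = f a := by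
  conv_rhs => rw [← b.sum_repr' a]
  rw [map_sum]
  refine Finset.sum_congr rfl fun i _ => ?_
  rw [map_smul, real_inner_comm, smul_eq_mul]

lemma key_sum {n : ℕ} (b : OrthonormalBasis (Fin n) ℝ V)
    (R : V →ₗ[ℝ] V →ₗ[ℝ] V →ₗ[ℝ] V →ₗ[ℝ] ℝ) (a c d e : V) :
    ∑ i, ∑ j, ∑ k, ∑ l,
      R (b i) (b j) (b k) (b l) * (⟪a, b i⟫ * ⟪e, b l⟫) * (⟪c, b j⟫ * ⟪d, b k⟫)
      = R a c d e := by
  have h4 : ∀ u v w : V, ∑ l, ⟪e, b l⟫ * R u v w (b l) = R u v w e :=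
    fun u v w => sum_repr_mul b (R u v w) e
  have h3 : ∀ u v : V, ∑ k, ⟪d, b k⟫ * R u v (b k) e = R u v d e :=
    fun u v => sum_repr_mul b ((R u v).flip e) d
  have h2 : ∀ u : V, ∑ j, ⟪c, b j⟫ * R u (b j) d e = R u c d e :=
    fun u => sum_repr_mul b (((R u).flip d).flip e) c
  have h1 : ∑ i, ⟪a, b i⟫ * R (b i) c d e = R a c d e :=
    sum_repr_mul b (((R.flip c).flip d).flip e) a
  have t1 : ∀ i j k, ∑ l, R (b i) (b j) (b k) (b l) * (⟪a, b i⟫ * ⟪e, b l⟫) * (⟪c, b j⟫ * ⟪d, b k⟫)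
      = ⟪a, b i⟫ * (⟪c, b j⟫ * (⟪d, b k⟫ * R (b i) (b j) (b k) e)) := by
    intro i j k
    rw [← h4 (b i) (b j) (b k), Finset.mul_sum, Finset.mul_sum, Finset.mul_sum]
    exact Finset.sum_congr rfl fun l _ => by ring
  simp only [t1, ← Finset.mul_sum, h3, h2]
  exact h1
section Calc
variable {n : ℕ} (b : OrthonormalBasis (Fin n) ℝ V)
    (R : V →ₗ[ℝ] V →ₗ[ℝ] V →ₗ[ℝ] V →ₗ[ℝ] ℝ)

lemma secondKind_outer (a c d e : V) :
    secondKind b R (outerForm a e) (outerForm c d) = R a c d e := by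
  simpa [secondKind] using key_sum b R a c d e

lemma formInner_outer (a e c d : V) :
    formInner b (outerForm a e) (outerForm c d) = ⟪a, c⟫ * ⟪e, d⟫ := by
  have p1 : ∑ i, ⟪a, b i⟫ * ⟪c, b i⟫ = ⟪a, c⟫ := by
    simpa [real_inner_comm] using b.sum_inner_mul_inner a c
  have p2 : ∑ j, ⟪e, b j⟫ * ⟪d, b j⟫ = ⟪e, d⟫ := by
    simpa [real_inner_comm] using b.sum_inner_mul_inner e d
  calc ∑ i, ∑ j, (⟪a, b i⟫ * ⟪e, b j⟫) * (⟪c, b i⟫ * ⟪d, b j⟫)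
      = ∑ i, (⟪a, b i⟫ * ⟪c, b i⟫) * ∑ j, ⟪e, b j⟫ * ⟪d, b j⟫ := by
        refine Finset.sum_congr rfl fun i _ => ?_
        rw [Finset.mul_sum]
        exact Finset.sum_congr rfl fun j _ => by ring
    _ = ⟪a, c⟫ * ⟪e, d⟫ := by rw [p2, ← Finset.sum_mul, p1]

lemma secondKind_add_left (φ φ' ψ : V →ₗ[ℝ] V →ₗ[ℝ] ℝ) :
    secondKind b R (φ + φ') ψ = secondKind b R φ ψ + secondKind b R φ' ψ := by
  simp [secondKind, add_mul, mul_add, Finset.sum_add_distrib]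

lemma secondKind_sub_left (φ φ' ψ : V →ₗ[ℝ] V →ₗ[ℝ] ℝ) :
    secondKind b R (φ - φ') ψ = secondKind b R φ ψ - secondKind b R φ' ψ := by
  simp [secondKind, sub_mul, mul_sub, Finset.sum_sub_distrib]

lemma secondKind_smul_left (c : ℝ) (φ ψ : V →ₗ[ℝ] V →ₗ[ℝ] ℝ) :
    secondKind b R (c • φ) ψ = c * secondKind b R φ ψ := by
  simp only [secondKind, LinearMap.smul_apply, smul_eq_mul, Finset.mul_sum]
  refine Finset.sum_congr rfl fun i _ => Finset.sum_congr rfl fun j _ =>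
    Finset.sum_congr rfl fun k _ => Finset.sum_congr rfl fun l _ => by ring

lemma secondKind_add_right (φ ψ ψ' : V →ₗ[ℝ] V →ₗ[ℝ] ℝ) :
    secondKind b R φ (ψ + ψ') = secondKind b R φ ψ + secondKind b R φ ψ' := by
  simp [secondKind, mul_add, Finset.sum_add_distrib]

lemma secondKind_sub_right (φ ψ ψ' : V →ₗ[ℝ] V →ₗ[ℝ] ℝ) :
    secondKind b R φ (ψ - ψ') = secondKind b R φ ψ - secondKind b R φ ψ' := by
  simp [secondKind, mul_sub, Finset.sum_sub_distrib]

lemma secondKind_smul_right (c : ℝ) (φ ψ : V →ₗ[ℝ] V →ₗ[ℝ] ℝ) :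
    secondKind b R φ (c • ψ) = c * secondKind b R φ ψ := by
  simp only [secondKind, LinearMap.smul_apply, smul_eq_mul, Finset.mul_sum]
  refine Finset.sum_congr rfl fun i _ => Finset.sum_congr rfl fun j _ =>
    Finset.sum_congr rfl fun k _ => Finset.sum_congr rfl fun l _ => by ring

lemma formInner_add_left (φ φ' ψ : V →ₗ[ℝ] V →ₗ[ℝ] ℝ) :
    formInner b (φ + φ') ψ = formInner b φ ψ + formInner b φ' ψ := by
  simp [formInner, add_mul, Finset.sum_add_distrib]

lemma formInner_sub_left (φ φ' ψ : V →ₗ[ℝ] V →ₗ[ℝ] ℝ) :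
    formInner b (φ - φ') ψ = formInner b φ ψ - formInner b φ' ψ := by
  simp [formInner, sub_mul, Finset.sum_sub_distrib]

lemma formInner_smul_left (c : ℝ) (φ ψ : V →ₗ[ℝ] V →ₗ[ℝ] ℝ) :
    formInner b (c • φ) ψ = c * formInner b φ ψ := by
  simp only [formInner, LinearMap.smul_apply, smul_eq_mul, Finset.mul_sum]
  refine Finset.sum_congr rfl fun i _ => Finset.sum_congr rfl fun j _ => by ring

lemma formInner_add_right (φ ψ ψ' : V →ₗ[ℝ] V →ₗ[ℝ] ℝ) :
    formInner b φ (ψ + ψ') = formInner b φ ψ + formInner b φ ψ' := by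
  simp [formInner, mul_add, Finset.sum_add_distrib]

lemma formInner_sub_right (φ ψ ψ' : V →ₗ[ℝ] V →ₗ[ℝ] ℝ) :
    formInner b φ (ψ - ψ') = formInner b φ ψ - formInner b φ ψ' := by
  simp [formInner, mul_sub, Finset.sum_sub_distrib]

lemma formInner_smul_right (c : ℝ) (φ ψ : V →ₗ[ℝ] V →ₗ[ℝ] ℝ) :
    formInner b φ (c • ψ) = c * formInner b φ ψ := by
  simp only [formInner, LinearMap.smul_apply, smul_eq_mul, Finset.mul_sum]
  refine Finset.sum_congr rfl fun i _ => Finset.sum_congr rfl fun j _ => by ring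

end Calc

theorem stmt_4 {n : ℕ} (hn : 4 ≤ n)
    (b : OrthonormalBasis (Fin n) ℝ V)
    (R : V →ₗ[ℝ] V →ₗ[ℝ] V →ₗ[ℝ] V →ₗ[ℝ] ℝ)
    (hR : IsAlgCurvatureTensor R)
    (h2 : kNonnegSecondKind b R 2) :
    ∀ x y : V, ‖x‖ = 1 → ‖y‖ = 1 → ⟪x, y⟫ = 0 → 0 ≤ R x y x y := by
  intro x y hx hy hxy
  obtain ⟨ha, hs, -⟩ := hR
  have hxx : ⟪x, x⟫ = 1 := by
    rw [real_inner_self_eq_norm_mul_norm, hx]; norm_num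
  have hyy : ⟪y, y⟫ = 1 := by
    rw [real_inner_self_eq_norm_mul_norm, hy]; norm_num
  have hyx : ⟪y, x⟫ = 0 := by rw [real_inner_comm]; exact hxy
  set c : ℝ := (Real.sqrt 2)⁻¹ with hc
  have hc2 : c * c = 1 / 2 := by
    rw [hc, ← mul_inv, Real.mul_self_sqrt (by norm_num : (0:ℝ) ≤ 2)]; norm_num
  set φ : V →ₗ[ℝ] V →ₗ[ℝ] ℝ := c • (outerForm x y + outerForm y x) with hφ
  set ψ : V →ₗ[ℝ] V →ₗ[ℝ] ℝ := c • (outerForm x x - outerForm y y) with hψ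
  have par : ∀ u w : V, ∑ i, ⟪u, b i⟫ * ⟪w, b i⟫ = ⟪u, w⟫ := fun u w => by
    simpa [real_inner_comm] using b.sum_inner_mul_inner u w
  -- tracelessness and symmetry
  have htφ : IsTracelessSymForm b φ := by
    constructor
    · intro u v
      simp only [hφ, LinearMap.smul_apply, LinearMap.add_apply, outerForm_apply, smul_eq_mul]
      ring
    · simp only [hφ, LinearMap.smul_apply, LinearMap.add_apply, outerForm_apply, smul_eq_mul]
      rw [← Finset.mul_sum, Finset.sum_add_distrib, par, par, hxy, hyx]
      ring
  have htψ : IsTracelessSymForm b ψ := by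
    constructor
    · intro u v
      simp only [hψ, LinearMap.smul_apply, LinearMap.sub_apply, outerForm_apply, smul_eq_mul]
      ring
    · simp only [hψ, LinearMap.smul_apply, LinearMap.sub_apply, outerForm_apply, smul_eq_mul]
      rw [← Finset.mul_sum, Finset.sum_sub_distrib, par, par, hxx, hyy]
      ring
  -- inner products
  have fφφ : formInner b φ φ = 1 := by
    simp only [hφ, formInner_smul_left, formInner_smul_right, formInner_add_left,
      formInner_add_right, formInner_outer, hxx, hyy, hxy, hyx]
    linear_combination 2 * hc2
  have fφψ : formInner b φ ψ = 0 := by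
    simp only [hφ, hψ, formInner_smul_left, formInner_smul_right, formInner_add_left,
      formInner_sub_right, formInner_outer, hxx, hyy, hxy, hyx]
    ring
  have fψφ : formInner b ψ φ = 0 := by
    simp only [hφ, hψ, formInner_smul_left, formInner_smul_right, formInner_add_right,
      formInner_sub_left, formInner_outer, hxx, hyy, hxy, hyx]
    ring
  have fψψ : formInner b ψ ψ = 1 := by
    simp only [hψ, formInner_smul_left, formInner_smul_right, formInner_sub_left,
      formInner_sub_right, formInner_outer, hxx, hyy, hxy, hyx]
    linear_combination 2 * hc2
  -- curvature identities
  have z1 : ∀ u z w : V, R u u z w = 0 := fun u z w => by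
    have := ha u u z w; linarith
  have e0 : R x y y x = - R x y x y := by
    rw [hs x y y x]; exact ha y x x y
  have e1 : R y x y x = R x y x y := by
    rw [ha y x y x, e0]; ring
  have e2 : R y x x y = - R x y x y := ha y x x y
  -- secondKind values
  have sφφ : secondKind b R φ φ = R x y x y := by
    simp only [hφ, secondKind_smul_left, secondKind_smul_right, secondKind_add_left,
      secondKind_add_right, secondKind_outer, z1, e1]
    linear_combination (2 * R x y x y) * hc2
  have sψψ : secondKind b R ψ ψ = R x y x y := by
    simp only [hψ, secondKind_smul_left, secondKind_smul_right, secondKind_sub_left,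
      secondKind_sub_right, secondKind_outer, z1, e0, e2]
    linear_combination (2 * R x y x y) * hc2
  -- apply 2-nonnegativity
  have key := h2 ![φ, ψ] (by
      intro a
      fin_cases a
      · exact htφ
      · exact htψ)
    (by
      intro a a'
      fin_cases a <;> fin_cases a' <;>
        simp [fφφ, fφψ, fψφ, fψψ])
  rw [Fin.sum_univ_two] at key
  simp only [Matrix.cons_val_zero, Matrix.cons_val_one, Matrix.head_cons, sφφ, sψψ] at key
  linarith
end

section
/- Let (V,⟨·,·⟩) be a real inner product space of dimension n ≥ 4 and let R be an algebraic curvature tensor on V. Then R has ((n-1)(n+2)/2)-positive curvature operator of the second kind if and only if the scalar curvature S of R is positive. -/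
open scoped RealInnerProductSpace

variable {V : Type*} [NormedAddCommGroup V] [InnerProductSpace ℝ V]

namespace Stmt5Aux

noncomputable section

abbrev W (n : ℕ) := EuclideanSpace ℝ (Fin n × Fin n)

/-- traceless symmetric "matrices" -/
def T (n : ℕ) : Submodule ℝ (W n) where
  carrier := {v | (∀ i j : Fin n, v (i,j) = v (j,i)) ∧ ∑ i, v (i,i) = 0}
  add_mem' := by
    intro x y hx hy
    refine ⟨fun i j => ?_, ?_⟩
    · simp [PiLp.add_apply, hx.1 i j, hy.1 i j]
    · simp [PiLp.add_apply, Finset.sum_add_distrib, hx.2, hy.2]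
  zero_mem' := by
    refine ⟨fun i j => rfl, ?_⟩
    simp
  smul_mem' := by
    intro c x hx
    refine ⟨fun i j => ?_, ?_⟩
    · simp [PiLp.smul_apply, hx.1 i j]
    · simp [PiLp.smul_apply, ← Finset.mul_sum, hx.2]

lemma mem_T {n : ℕ} {v : W n} :
    v ∈ T n ↔ (∀ i j : Fin n, v (i,j) = v (j,i)) ∧ ∑ i, v (i,i) = 0 := Iff.rfl

lemma inner_W {n : ℕ} (x y : W n) : ⟪x, y⟫ = ∑ i, ∑ j, x (i,j) * y (i,j) := by
  rw [PiLp.inner_apply, Fintype.sum_prod_type]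
  simp [RCLike.inner_apply]
  exact Finset.sum_congr rfl fun _ _ => Finset.sum_congr rfl fun _ _ => mul_comm _ _

def q (n : ℕ) (i l : Fin n) : W n :=
  (WithLp.equiv 2 _).symm fun p =>
    ((if p = (i,l) then (1:ℝ) else 0) + (if p = (l,i) then 1 else 0))/2
      - (if p.1 = p.2 ∧ i = l then (1:ℝ)/n else 0)

lemma q_apply {n : ℕ} (i l : Fin n) (p : Fin n × Fin n) :
    q n i l p = ((if p = (i,l) then (1:ℝ) else 0) + (if p = (l,i) then 1 else 0))/2
      - (if p.1 = p.2 ∧ i = l then (1:ℝ)/n else 0) := rfl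

lemma q_mem {n : ℕ} (hn : n ≠ 0) (i l : Fin n) : q n i l ∈ T n := by
  have hn' : (n:ℝ) ≠ 0 := Nat.cast_ne_zero.mpr hn
  constructor
  · intro a c
    simp only [q_apply, Prod.mk.injEq]
    by_cases h1 : a = i ∧ c = l <;> by_cases h2 : a = l ∧ c = i <;>
      by_cases h3 : a = c <;>
      simp_all [eq_comm, and_comm] <;> ring_nf <;> tauto
  · simp only [q_apply, Prod.mk.injEq]
    by_cases h : i = l
    · subst h
      rw [Finset.sum_sub_distrib]
      simp [Finset.sum_ite_eq, Finset.sum_div, Finset.mul_sum]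
      field_simp
      norm_num
    · have : ∀ a : Fin n, ¬ (a = i ∧ a = l) := by rintro a ⟨rfl, rfl⟩; exact h rfl
      simp [this, h, and_comm]

lemma inner_q {n : ℕ} (i l : Fin n) (w : W n) (hw : w ∈ T n) :
    ⟪q n i l, w⟫ = w (i,l) := by
  obtain ⟨hsym, htr⟩ := hw
  rw [inner_W]
  simp only [q_apply, Prod.mk.injEq]
  have key : ∀ a c : Fin n,
      (((if a = i ∧ c = l then (1:ℝ) else 0) + (if a = l ∧ c = i then 1 else 0))/2
        - (if a = c ∧ i = l then (1:ℝ)/n else 0)) * w (a,c)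
      = (if a = i ∧ c = l then w (a,c) / 2 else 0)
        + (if a = l ∧ c = i then w (a,c) / 2 else 0)
        - (if a = c ∧ i = l then w (a,c) / n else 0) := by
    intro a c
    split_ifs <;> ring
  simp only [key]
  rw [Finset.sum_congr rfl (fun a _ => Finset.sum_sub_distrib _ _),
      Finset.sum_sub_distrib,
      Finset.sum_congr rfl (fun a _ => Finset.sum_add_distrib),
      Finset.sum_add_distrib]
  have e1 : ∑ a : Fin n, ∑ c : Fin n, (if a = i ∧ c = l then w (a,c) / 2 else 0)
      = w (i,l) / 2 := by
    simp [ite_and, Finset.sum_ite_eq']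
  have e2 : ∑ a : Fin n, ∑ c : Fin n, (if a = l ∧ c = i then w (a,c) / 2 else 0)
      = w (i,l) / 2 := by
    simp [ite_and, Finset.sum_ite_eq', hsym l i]
  have e3 : ∑ a : Fin n, ∑ c : Fin n, (if a = c ∧ i = l then w (a,c) / n else 0) = 0 := by
    by_cases h : i = l
    · simp only [h, and_true]
      have : ∀ a : Fin n, ∑ c : Fin n, (if a = c then w (a,c) / n else 0) = w (a,a) / n := by
        intro a; simp [Finset.sum_ite_eq]
      rw [Finset.sum_congr rfl fun a _ => this a, ← Finset.sum_div, htr, zero_div]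
    · simp [h]
  rw [e1, e2, e3]
  ring

end
end Stmt5Aux
namespace Stmt5Aux
noncomputable section

def ltEquiv (n : ℕ) : {p : Fin n × Fin n // p.1 < p.2} ≃ Σ j : Fin n, Fin j.val where
  toFun p := ⟨p.1.2, ⟨p.1.1.val, p.2⟩⟩
  invFun x := ⟨(⟨x.2.val, lt_trans x.2.isLt x.1.isLt⟩, x.1), x.2.isLt⟩
  left_inv := by rintro ⟨⟨i, j⟩, h⟩; rfl
  right_inv := by rintro ⟨j, x⟩; rfl

lemma card_lt_pairs (n : ℕ) :
    2 * Fintype.card {p : Fin n × Fin n // p.1 < p.2} = n * (n - 1) := by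
  rw [Fintype.card_congr (ltEquiv n), Fintype.card_sigma]
  simp only [Fintype.card_fin]
  rw [Fin.sum_univ_eq_sum_range (fun i => i) n, mul_comm, Finset.sum_range_id_mul_two]

def diagEquiv (n : ℕ) : {i : Fin n // i.val < n - 1} ≃ Fin (n - 1) where
  toFun i := ⟨i.1.val, i.2⟩
  invFun j := ⟨⟨j.val, by omega⟩, j.isLt⟩
  left_inv := by rintro ⟨i, h⟩; rfl
  right_inv := by rintro ⟨j, h⟩; rfl

abbrev Usp (n : ℕ) :=
  ({p : Fin n × Fin n // p.1 < p.2} → ℝ) × ({i : Fin n // i.val < n - 1} → ℝ)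

def toU (n : ℕ) : T n →ₗ[ℝ] Usp n where
  toFun v := (fun p => v.1 p.1, fun i => v.1 (i.1, i.1))
  map_add' v w := by
    refine Prod.ext ?_ ?_ <;> funext x <;> simp [PiLp.add_apply]
  map_smul' c v := by
    refine Prod.ext ?_ ?_ <;> funext x <;> simp [PiLp.smul_apply]

lemma toU_inj (n : ℕ) : Function.Injective (toU n) := by
  intro v w h
  have h1 : ∀ p : {p : Fin n × Fin n // p.1 < p.2}, (v : W n) p.1 = (w : W n) p.1 :=
    fun p => congrFun (congrArg Prod.fst h) p
  have h2 : ∀ i : {i : Fin n // i.val < n - 1}, (v : W n) (i.1, i.1) = (w : W n) (i.1, i.1) :=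
    fun i => congrFun (congrArg Prod.snd h) i
  have hvT := v.2
  have hwT := w.2
  rw [mem_T] at hvT hwT
  have main : ∀ a c : Fin n, ¬(a = c ∧ a.val = n - 1) → (v : W n) (a, c) = (w : W n) (a, c) := by
    intro a c hac
    rcases lt_trichotomy a c with hlt | heq | hgt
    · exact h1 ⟨(a, c), hlt⟩
    · subst heq
      have hlt : a.val < n - 1 := by
        have := a.isLt
        have : ¬ a.val = n - 1 := fun hh => hac ⟨rfl, hh⟩
        omega
      exact h2 ⟨a, hlt⟩
    · rw [hvT.1 a c, hwT.1 a c]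
      exact h1 ⟨(c, a), hgt⟩
  have last : ∀ a c : Fin n, (v : W n) (a, c) = (w : W n) (a, c) := by
    intro a c
    by_cases hac : a = c ∧ a.val = n - 1
    · obtain ⟨rfl, ha⟩ := hac
      have hsumv : (∑ i, (v : W n) (i,i)) = (v : W n) (a,a) +
          ∑ i ∈ Finset.univ.erase a, (v : W n) (i,i) :=
        (Finset.add_sum_erase _ _ (Finset.mem_univ a)).symm
      have hsumw : (∑ i, (w : W n) (i,i)) = (w : W n) (a,a) +
          ∑ i ∈ Finset.univ.erase a, (w : W n) (i,i) :=
        (Finset.add_sum_erase _ _ (Finset.mem_univ a)).symm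
      rw [hvT.2] at hsumv
      rw [hwT.2] at hsumw
      have herase : ∑ i ∈ Finset.univ.erase a, (v : W n) (i,i)
          = ∑ i ∈ Finset.univ.erase a, (w : W n) (i,i) := by
        refine Finset.sum_congr rfl fun i hi => ?_
        have hia : i ≠ a := Finset.ne_of_mem_erase hi
        refine main i i ?_
        rintro ⟨-, hival⟩
        exact hia (Fin.ext (by omega))
      rw [herase] at hsumv
      linarith
    · exact main a c hac
  exact Subtype.ext (PiLp.ext fun p => last p.1 p.2)

lemma toU_surj (n : ℕ) (hn : 1 ≤ n) : Function.Surjective (toU n) := by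
  rintro ⟨uo, ud⟩
  set lastSum : ℝ := ∑ i : Fin n, (if h : i.val < n - 1 then ud ⟨i, h⟩ else 0) with hlastSum
  set f : Fin n → Fin n → ℝ := fun a c =>
    if h : a < c then uo ⟨(a, c), h⟩
    else if h' : c < a then uo ⟨(c, a), h'⟩
    else if h'' : a.val < n - 1 then ud ⟨a, h''⟩
    else - lastSum with hf
  have hfac : ∀ a c : Fin n, f a c =
      (if h : a < c then uo ⟨(a, c), h⟩
      else if h' : c < a then uo ⟨(c, a), h'⟩
      else if h'' : a.val < n - 1 then ud ⟨a, h''⟩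
      else - lastSum) := fun a c => by rw [hf]
  have hfsym : ∀ a c : Fin n, f a c = f c a := by
    intro a c
    rcases lt_trichotomy a c with h | h | h
    · rw [hfac, hfac, dif_pos h, dif_neg (not_lt.mpr (le_of_lt h)), dif_pos h]
    · subst h; rfl
    · rw [hfac, hfac, dif_pos h, dif_neg (not_lt.mpr (le_of_lt h)), dif_pos h]
  have hfilter : Finset.univ.filter (fun i : Fin n => ¬ i.val < n - 1)
      = {(⟨n - 1, by omega⟩ : Fin n)} := by
    ext i
    simp only [Finset.mem_filter, Finset.mem_univ, true_and, Finset.mem_singleton]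
    constructor
    · intro hi
      have := i.isLt
      refine Fin.ext ?_
      show i.val = n - 1
      omega
    · intro hi
      subst hi
      show ¬ n - 1 < n - 1
      omega
  have hftr : ∑ i : Fin n, f i i = 0 := by
    have step : ∀ i : Fin n, f i i
        = (if h : i.val < n - 1 then ud ⟨i, h⟩ else 0)
          - (if i.val < n - 1 then 0 else lastSum) := by
      intro i
      rw [hfac, dif_neg (lt_irrefl i), dif_neg (lt_irrefl i)]
      by_cases h : i.val < n - 1
      · rw [dif_pos h, dif_pos h, if_pos h, sub_zero]
      · rw [dif_neg h, dif_neg h, if_neg h, zero_sub]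
    rw [Finset.sum_congr rfl fun i _ => step i, Finset.sum_sub_distrib, ← hlastSum]
    have : ∑ i : Fin n, (if i.val < n - 1 then (0:ℝ) else lastSum)
        = ∑ i ∈ Finset.univ.filter (fun i : Fin n => ¬ i.val < n - 1), lastSum := by
      rw [Finset.sum_filter]
      refine Finset.sum_congr rfl fun i _ => ?_
      by_cases h : i.val < n - 1 <;> simp [h]
    rw [this, hfilter, Finset.sum_singleton, sub_self]
  refine ⟨⟨(WithLp.equiv 2 _).symm (fun p => f p.1 p.2), fun i j => hfsym i j, hftr⟩, ?_⟩
  refine Prod.ext ?_ ?_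
  · funext p
    show f p.1.1 p.1.2 = uo p
    rw [hfac, dif_pos p.2]
  · funext i
    show f i.1 i.1 = ud i
    rw [hfac, dif_neg (lt_irrefl i.1), dif_neg (lt_irrefl i.1), dif_pos i.2]

lemma finrank_T {n : ℕ} (hn : 4 ≤ n) :
    Module.finrank ℝ (T n) = (n - 1) * (n + 2) / 2 := by
  have e : (T n) ≃ₗ[ℝ] Usp n :=
    LinearEquiv.ofBijective (toU n) ⟨toU_inj n, toU_surj n (by omega)⟩
  rw [e.finrank_eq]
  rw [Module.finrank_prod, Module.finrank_pi ℝ, Module.finrank_pi ℝ]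
  rw [Fintype.card_congr (diagEquiv n), Fintype.card_fin]
  have hc := card_lt_pairs n
  set c := Fintype.card {p : Fin n × Fin n // p.1 < p.2}
  obtain ⟨m, rfl⟩ : ∃ m, n = m + 4 := ⟨n - 4, by omega⟩
  have key : (m + 4 - 1) * (m + 4 + 2) = 2 * (c + (m + 4 - 1)) := by
    have h1 : m + 4 - 1 = m + 3 := rfl
    rw [h1] at hc ⊢
    nlinarith [hc]
  omega

end
end Stmt5Aux
namespace Stmt5Aux
noncomputable section

lemma sum_expand {α : Type*} [Fintype α] {K : ℕ} (C : Matrix (Fin K) (Fin K) ℝ)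
    (hC : ∀ bb cc : Fin K, ∑ a, C a bb * C a cc = if bb = cc then 1 else 0)
    (G : α → ℝ) (u v : Fin K → α → ℝ) :
    ∑ a, ∑ z, G z * (∑ bb, C a bb * u bb z) * (∑ cc, C a cc * v cc z)
      = ∑ bb, ∑ z, G z * u bb z * v bb z := by
  have swap1 : ∀ a, ∑ z, G z * (∑ bb, C a bb * u bb z) * (∑ cc, C a cc * v cc z)
      = ∑ bb, ∑ cc, (∑ z, G z * u bb z * v cc z) * (C a bb * C a cc) := by
    intro a
    have p1 : ∀ z, G z * (∑ bb, C a bb * u bb z) * (∑ cc, C a cc * v cc z)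
        = ∑ bb, ∑ cc, (G z * u bb z * v cc z) * (C a bb * C a cc) := by
      intro z
      rw [mul_assoc, Finset.sum_mul_sum]
      rw [Finset.mul_sum]
      refine Finset.sum_congr rfl fun bb _ => ?_
      rw [Finset.mul_sum]
      refine Finset.sum_congr rfl fun cc _ => ?_
      ring
    rw [Finset.sum_congr rfl fun z _ => p1 z]
    rw [Finset.sum_comm]
    refine Finset.sum_congr rfl fun bb _ => ?_
    rw [Finset.sum_comm]
    refine Finset.sum_congr rfl fun cc _ => ?_
    rw [← Finset.sum_mul]
  rw [Finset.sum_congr rfl fun a _ => swap1 a]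
  rw [Finset.sum_comm]
  refine Finset.sum_congr rfl fun bb _ => ?_
  rw [Finset.sum_comm]
  have : ∀ cc, ∑ a, (∑ z, G z * u bb z * v cc z) * (C a bb * C a cc)
      = (∑ z, G z * u bb z * v cc z) * (if bb = cc then 1 else 0) := by
    intro cc
    rw [← Finset.mul_sum, hC bb cc]
  rw [Finset.sum_congr rfl fun cc _ => this cc]
  simp [Finset.sum_ite_eq, mul_ite]

lemma contract {n : ℕ} (hn : 4 ≤ n) (Rc : Fin n → Fin n → Fin n → Fin n → ℝ)
    (hRa : ∀ i j k l, Rc i j k l = - Rc j i k l)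
    (hRb : ∀ i j k l, Rc i j k l = Rc k l i j) :
    ∑ i, ∑ j, ∑ k, ∑ l, Rc i j k l * (q n j k) (i, l)
      = (1/2 + 1/(n:ℝ)) * ∑ i, ∑ j, Rc i j i j := by
  have zero1 : ∀ i k l, Rc i i k l = 0 := by
    intro i k l; have := hRa i i k l; linarith
  have flip : ∀ i j, Rc i j j i = - Rc i j i j := by
    intro i j
    rw [hRb i j j i, hRa j i i j]
  have point : ∀ i j k l : Fin n, Rc i j k l * (q n j k) (i, l)
      = ((if i = j ∧ l = k then Rc i j k l * (1/2) else 0)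
        + (if i = k ∧ l = j then Rc i j k l * (1/2) else 0))
        - (if i = l ∧ j = k then Rc i j k l * (1/(n:ℝ)) else 0) := by
    intro i j k l
    rw [q_apply]
    simp only [Prod.mk.injEq]
    split_ifs <;> ring
  rw [Finset.sum_congr rfl fun i _ => Finset.sum_congr rfl fun j _ =>
    Finset.sum_congr rfl fun k _ => Finset.sum_congr rfl fun l _ => point i j k l]
  simp only [Finset.sum_add_distrib, Finset.sum_sub_distrib]
  have E1 : ∑ i : Fin n, ∑ j : Fin n, ∑ k : Fin n, ∑ l : Fin n,
      (if i = j ∧ l = k then Rc i j k l * (1/2) else 0) = 0 := by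
    refine Finset.sum_eq_zero fun i _ => Finset.sum_eq_zero fun j _ =>
      Finset.sum_eq_zero fun k _ => Finset.sum_eq_zero fun l _ => ?_
    split_ifs with h
    · obtain ⟨rfl, rfl⟩ := h
      rw [zero1]; ring
    · rfl
  have E2 : ∑ i : Fin n, ∑ j : Fin n, ∑ k : Fin n, ∑ l : Fin n,
      (if i = k ∧ l = j then Rc i j k l * (1/2) else 0)
      = ∑ i, ∑ j, Rc i j i j * (1/2) := by
    refine Finset.sum_congr rfl fun i _ => Finset.sum_congr rfl fun j _ => ?_
    have h1 : ∀ k : Fin n, ∑ l, (if i = k ∧ l = j then Rc i j k l * (1/2) else 0)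
        = (if i = k then Rc i j k j * (1/2) else 0) := by
      intro k
      by_cases h : i = k
      · subst h
        simp only [eq_self_iff_true, true_and, if_true]
        rw [Finset.sum_ite_eq' Finset.univ j (fun l => Rc i j i l * (1/2))]
        simp
      · simp [h]
    rw [Finset.sum_congr rfl fun k _ => h1 k]
    rw [Finset.sum_ite_eq Finset.univ i (fun k => Rc i j k j * (1/2))]
    simp
  have E3 : ∑ i : Fin n, ∑ j : Fin n, ∑ k : Fin n, ∑ l : Fin n,
      (if i = l ∧ j = k then Rc i j k l * (1/(n:ℝ)) else 0)
      = - ∑ i, ∑ j, Rc i j i j * (1/(n:ℝ)) := by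
    rw [← Finset.sum_neg_distrib]
    refine Finset.sum_congr rfl fun i _ => ?_
    rw [← Finset.sum_neg_distrib]
    refine Finset.sum_congr rfl fun j _ => ?_
    have h1 : ∀ k : Fin n, ∑ l, (if i = l ∧ j = k then Rc i j k l * (1/(n:ℝ)) else 0)
        = (if j = k then Rc i j k i * (1/(n:ℝ)) else 0) := by
      intro k
      by_cases h : j = k
      · subst h
        simp only [eq_self_iff_true, and_true, if_true]
        rw [Finset.sum_ite_eq Finset.univ i (fun l => Rc i j j l * (1/(n:ℝ)))]
        simp
      · simp [h]
    rw [Finset.sum_congr rfl fun k _ => h1 k]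
    rw [Finset.sum_ite_eq Finset.univ j (fun k => Rc i j k i * (1/(n:ℝ)))]
    simp only [Finset.mem_univ, if_true]
    rw [flip i j]
    ring
  rw [E1, E2, E3]
  simp only [← Finset.sum_mul]
  ring

end
end Stmt5Aux
namespace Stmt5Aux
noncomputable section
open scoped RealInnerProductSpace
open Matrix

lemma key {n : ℕ} (hn : 4 ≤ n) (Rc : Fin n → Fin n → Fin n → Fin n → ℝ)
    (hRa : ∀ i j k l, Rc i j k l = - Rc j i k l)
    (hRb : ∀ i j k l, Rc i j k l = Rc k l i j)
    (m : Fin ((n - 1) * (n + 2) / 2) → W n)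
    (hmT : ∀ a, m a ∈ T n)
    (hmO : ∀ a a', ⟪m a, m a'⟫ = if a = a' then (1:ℝ) else 0) :
    ∑ a, ∑ i, ∑ j, ∑ k, ∑ l, Rc i j k l * (m a) (i, l) * (m a) (j, k)
      = (1/2 + 1/(n:ℝ)) * ∑ i, ∑ j, Rc i j i j := by
  classical
  have hn0 : n ≠ 0 := by omega
  have hrk : Module.finrank ℝ (T n) = (n - 1) * (n + 2) / 2 := finrank_T hn
  set ψb := stdOrthonormalBasis ℝ (T n) with hψb
  let e : Fin ((n - 1) * (n + 2) / 2) ≃ Fin (Module.finrank ℝ (T n)) := finCongr hrk.symm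
  set ψ : Fin ((n - 1) * (n + 2) / 2) → W n := fun x => (ψb (e x) : W n) with hψdef
  have hψT : ∀ x, ψ x ∈ T n := fun x => (ψb (e x)).2
  have pars : ∀ u, u ∈ T n → ∀ v, v ∈ T n →
      ∑ x, ⟪u, ψ x⟫ * ⟪v, ψ x⟫ = ⟪u, v⟫ := by
    intro u hu v hv
    have base := ψb.sum_inner_mul_inner (⟨u, hu⟩ : T n) (⟨v, hv⟩ : T n)
    calc ∑ x, ⟪u, ψ x⟫ * ⟪v, ψ x⟫
        = ∑ x, ⟪(⟨u,hu⟩ : T n), ψb (e x)⟫ * ⟪ψb (e x), (⟨v,hv⟩ : T n)⟫ := by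
          refine Finset.sum_congr rfl fun x _ => ?_
          rw [real_inner_comm (ψ x) v]
          rfl
      _ = ∑ y, ⟪(⟨u,hu⟩ : T n), ψb y⟫ * ⟪ψb y, (⟨v,hv⟩ : T n)⟫ :=
          Equiv.sum_comp e (fun y => ⟪(⟨u,hu⟩ : T n), ψb y⟫ * ⟪ψb y, (⟨v,hv⟩ : T n)⟫)
      _ = ⟪(⟨u,hu⟩ : T n), (⟨v,hv⟩ : T n)⟫ := base
      _ = ⟪u, v⟫ := rfl
  set C : Matrix (Fin ((n - 1) * (n + 2) / 2)) (Fin ((n - 1) * (n + 2) / 2)) ℝ :=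
    fun a bb => ⟪m a, ψ bb⟫ with hCdef
  have hCapp : ∀ a bb, C a bb = ⟪m a, ψ bb⟫ := fun a bb => by rw [hCdef]
  have hCCt : ∀ a a', ∑ bb, C a bb * C a' bb = if a = a' then (1:ℝ) else 0 := by
    intro a a'
    have := pars (m a) (hmT a) (m a') (hmT a')
    rw [hmO a a'] at this
    rw [← this]
  have hmul : C * Cᵀ = 1 := by
    ext a a'
    rw [Matrix.mul_apply]
    simp only [Matrix.transpose_apply]
    rw [hCCt a a']
    exact (Matrix.one_apply).symm
  have hCtC := mul_eq_one_comm.mp hmul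
  have hsum : ∀ bb cc, ∑ a, C a bb * C a cc = if bb = cc then (1:ℝ) else 0 := by
    intro bb cc
    have h := congrFun (congrFun hCtC bb) cc
    simp only [Matrix.mul_apply, Matrix.transpose_apply, Matrix.one_apply] at h
    exact h
  have hExp : ∀ a (i l : Fin n), (m a) (i, l) = ∑ bb, C a bb * ψ bb (i, l) := by
    intro a i l
    have h1 : ⟪q n i l, m a⟫ = m a (i, l) := inner_q i l (m a) (hmT a)
    have h2 := pars (q n i l) (q_mem hn0 i l) (m a) (hmT a)
    rw [← h1, ← h2]
    refine Finset.sum_congr rfl fun bb _ => ?_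
    rw [hCapp, inner_q i l (ψ bb) (hψT bb), mul_comm]
  have flat : ∀ g : Fin n → Fin n → Fin n → Fin n → ℝ,
      (∑ i, ∑ j, ∑ k, ∑ l, g i j k l)
      = ∑ z : (Fin n × Fin n) × Fin n × Fin n, g z.1.1 z.1.2 z.2.1 z.2.2 := by
    intro g
    simp only [Fintype.sum_prod_type]
  set G : ((Fin n × Fin n) × Fin n × Fin n) → ℝ := fun z => Rc z.1.1 z.1.2 z.2.1 z.2.2 with hG
  set u : Fin ((n - 1) * (n + 2) / 2) → ((Fin n × Fin n) × Fin n × Fin n) → ℝ :=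
    fun bb z => ψ bb (z.1.1, z.2.2) with hu
  set v : Fin ((n - 1) * (n + 2) / 2) → ((Fin n × Fin n) × Fin n × Fin n) → ℝ :=
    fun bb z => ψ bb (z.1.2, z.2.1) with hv
  calc ∑ a, ∑ i, ∑ j, ∑ k, ∑ l, Rc i j k l * (m a) (i, l) * (m a) (j, k)
      = ∑ a, ∑ z, G z * (∑ bb, C a bb * u bb z) * (∑ cc, C a cc * v cc z) := by
        refine Finset.sum_congr rfl fun a _ => ?_
        rw [flat (fun i j k l => Rc i j k l * (m a) (i, l) * (m a) (j, k))]
        refine Finset.sum_congr rfl fun z _ => ?_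
        rw [hG, hu, hv]
        simp only []
        rw [← hExp a z.1.1 z.2.2, ← hExp a z.1.2 z.2.1]
    _ = ∑ bb, ∑ z, G z * u bb z * v bb z := sum_expand C hsum G u v
    _ = ∑ z, G z * (∑ bb, u bb z * v bb z) := by
        rw [Finset.sum_comm]
        refine Finset.sum_congr rfl fun z _ => ?_
        rw [Finset.mul_sum]
        exact Finset.sum_congr rfl fun bb _ => mul_assoc _ _ _
    _ = ∑ z, G z * (q n z.1.2 z.2.1) (z.1.1, z.2.2) := by
        refine Finset.sum_congr rfl fun z _ => ?_
        congr 1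
        have h2 := pars (q n z.1.1 z.2.2) (q_mem hn0 z.1.1 z.2.2)
          (q n z.1.2 z.2.1) (q_mem hn0 z.1.2 z.2.1)
        rw [inner_q z.1.1 z.2.2 (q n z.1.2 z.2.1) (q_mem hn0 z.1.2 z.2.1)] at h2
        rw [← h2]
        refine Finset.sum_congr rfl fun bb _ => ?_
        rw [inner_q z.1.1 z.2.2 (ψ bb) (hψT bb), inner_q z.1.2 z.2.1 (ψ bb) (hψT bb)]
    _ = ∑ i, ∑ j, ∑ k, ∑ l, Rc i j k l * (q n j k) (i, l) := by
        rw [flat (fun i j k l => Rc i j k l * (q n j k) (i, l))]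
    _ = (1/2 + 1/(n:ℝ)) * ∑ i, ∑ j, Rc i j i j := contract hn Rc hRa hRb

end
end Stmt5Aux
namespace Stmt5Aux
noncomputable section
open scoped RealInnerProductSpace

variable {V : Type*} [NormedAddCommGroup V] [InnerProductSpace ℝ V]

def liftForm {n : ℕ} (b : OrthonormalBasis (Fin n) ℝ V) (w : W n) :
    V →ₗ[ℝ] V →ₗ[ℝ] ℝ :=
  LinearMap.mk₂ ℝ (fun x y => ∑ i, ∑ j, w (i, j) * ⟪b i, x⟫ * ⟪b j, y⟫)
    (fun x x' y => by
      simp only [inner_add_right]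
      rw [← Finset.sum_add_distrib]
      refine Finset.sum_congr rfl fun i _ => ?_
      rw [← Finset.sum_add_distrib]
      exact Finset.sum_congr rfl fun j _ => by ring)
    (fun c x y => by
      simp only [real_inner_smul_right, smul_eq_mul]
      rw [Finset.mul_sum]
      refine Finset.sum_congr rfl fun i _ => ?_
      rw [Finset.mul_sum]
      exact Finset.sum_congr rfl fun j _ => by ring)
    (fun x y y' => by
      simp only [inner_add_right]
      rw [← Finset.sum_add_distrib]
      refine Finset.sum_congr rfl fun i _ => ?_
      rw [← Finset.sum_add_distrib]
      exact Finset.sum_congr rfl fun j _ => by ring)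
    (fun c x y => by
      simp only [real_inner_smul_right, smul_eq_mul]
      rw [Finset.mul_sum]
      refine Finset.sum_congr rfl fun i _ => ?_
      rw [Finset.mul_sum]
      exact Finset.sum_congr rfl fun j _ => by ring)

lemma liftForm_basis {n : ℕ} (b : OrthonormalBasis (Fin n) ℝ V) (w : W n)
    (i0 j0 : Fin n) : liftForm b w (b i0) (b j0) = w (i0, j0) := by
  have hb := orthonormal_iff_ite.mp b.orthonormal
  simp only [liftForm, LinearMap.mk₂_apply, hb]
  simp [mul_ite, ite_mul, mul_one, mul_zero, zero_mul, Finset.sum_ite_eq', Finset.sum_ite_eq]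

lemma liftForm_symm {n : ℕ} (b : OrthonormalBasis (Fin n) ℝ V) (w : W n)
    (hw : ∀ i j : Fin n, w (i, j) = w (j, i)) (x y : V) :
    liftForm b w x y = liftForm b w y x := by
  simp only [liftForm, LinearMap.mk₂_apply]
  rw [Finset.sum_comm]
  refine Finset.sum_congr rfl fun j _ => Finset.sum_congr rfl fun i _ => ?_
  rw [hw i j]
  ring

end
end Stmt5Aux


theorem stmt_5 {n : ℕ} (hn : 4 ≤ n)
    (b : OrthonormalBasis (Fin n) ℝ V)
    (R : V →ₗ[ℝ] V →ₗ[ℝ] V →ₗ[ℝ] V →ₗ[ℝ] ℝ)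
    (hR : IsAlgCurvatureTensor R) :
    kPosSecondKind b R ((n - 1) * (n + 2) / 2) ↔ 0 < scalarCurv b R := by

  classical
  obtain ⟨hRa, hRb, -⟩ := hR
  have hn0 : n ≠ 0 := by omega
  have hnR : (0:ℝ) < (n:ℝ) := by exact_mod_cast Nat.pos_of_ne_zero hn0
  have hc : (0:ℝ) < 1/2 + 1/(n:ℝ) := by positivity
  set Rc : Fin n → Fin n → Fin n → Fin n → ℝ := fun i j k l => R (b i) (b j) (b k) (b l)
    with hRc
  have hRa' : ∀ i j k l, Rc i j k l = - Rc j i k l := fun i j k l => hRa _ _ _ _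
  have hRb' : ∀ i j k l, Rc i j k l = Rc k l i j := fun i j k l => hRb _ _ _ _
  have hS : scalarCurv b R = ∑ i, ∑ j, Rc i j i j := rfl
  constructor
  · intro hpos
    have hrk : Module.finrank ℝ (Stmt5Aux.T n) = (n - 1) * (n + 2) / 2 := Stmt5Aux.finrank_T hn
    set ψb := stdOrthonormalBasis ℝ (Stmt5Aux.T n) with hψb
    let e : Fin ((n - 1) * (n + 2) / 2) ≃ Fin (Module.finrank ℝ (Stmt5Aux.T n)) :=
      finCongr hrk.symm
    set mfam : Fin ((n - 1) * (n + 2) / 2) → Stmt5Aux.W n :=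
      fun a => (ψb (e a) : Stmt5Aux.W n) with hmfam
    have hmT : ∀ a, mfam a ∈ Stmt5Aux.T n := fun a => (ψb (e a)).2
    have hmO : ∀ a a', ⟪mfam a, mfam a'⟫ = if a = a' then (1:ℝ) else 0 := by
      intro a a'
      have h2 := orthonormal_iff_ite.mp ψb.orthonormal (e a) (e a')
      have h3 : (e a = e a') = (a = a') := propext e.apply_eq_iff_eq
      simp only [h3] at h2
      exact h2
    set Φ : Fin ((n - 1) * (n + 2) / 2) → (V →ₗ[ℝ] V →ₗ[ℝ] ℝ) :=
      fun a => Stmt5Aux.liftForm b (mfam a) with hΦ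
    have hbasis : ∀ a i j, Φ a (b i) (b j) = mfam a (i, j) :=
      fun a i j => Stmt5Aux.liftForm_basis b (mfam a) i j
    have hts : ∀ a, IsTracelessSymForm b (Φ a) := by
      intro a
      constructor
      · exact fun x y => Stmt5Aux.liftForm_symm b (mfam a) (hmT a).1 x y
      · rw [Finset.sum_congr rfl fun i _ => hbasis a i i]
        exact (hmT a).2
    have hON : ∀ a a', formInner b (Φ a) (Φ a') = if a = a' then (1:ℝ) else 0 := by
      intro a a'
      rw [← hmO a a', Stmt5Aux.inner_W]
      exact Finset.sum_congr rfl fun i _ => Finset.sum_congr rfl fun j _ => by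
        rw [hbasis, hbasis]
    have hposval := hpos Φ hts hON
    have hsk : ∑ a, secondKind b R (Φ a) (Φ a) = (1/2 + 1/(n:ℝ)) * scalarCurv b R := by
      rw [hS, ← Stmt5Aux.key hn Rc hRa' hRb' mfam hmT hmO]
      refine Finset.sum_congr rfl fun a _ => ?_
      refine Finset.sum_congr rfl fun i _ => Finset.sum_congr rfl fun j _ =>
        Finset.sum_congr rfl fun k _ => Finset.sum_congr rfl fun l _ => ?_
      rw [hbasis, hbasis]
    rw [hsk] at hposval
    rcases mul_pos_iff.mp hposval with ⟨-, h⟩ | ⟨h1, -⟩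
    · exact h
    · linarith
  · intro hS0 φ hts hON
    set mfam : Fin ((n - 1) * (n + 2) / 2) → Stmt5Aux.W n :=
      fun a => (WithLp.equiv 2 _).symm (fun p => φ a (b p.1) (b p.2)) with hm
    have hmT : ∀ a, mfam a ∈ Stmt5Aux.T n := by
      intro a
      exact ⟨fun i j => (hts a).1 (b i) (b j), (hts a).2⟩
    have hmO : ∀ a a', ⟪mfam a, mfam a'⟫ = if a = a' then (1:ℝ) else 0 := by
      intro a a'
      rw [Stmt5Aux.inner_W, ← hON a a']
      rfl
    have hkey := Stmt5Aux.key hn Rc hRa' hRb' mfam hmT hmO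
    have hsum : ∑ a, secondKind b R (φ a) (φ a) = (1/2 + 1/(n:ℝ)) * scalarCurv b R := by
      rw [hS, ← hkey]
      rfl
    rw [hsum]
    exact mul_pos hc hS0
end

section
/- Let (V,⟨·,·⟩) be a real inner product space of dimension n ≥ 4 and let R be an algebraic curvature tensor on V. Then R has ((n-1)(n+2)/2)-nonnegative curvature operator of the second kind if and only if the scalar curvature S of R is nonnegative. -/
open scoped RealInnerProductSpace

variable {V : Type*} [NormedAddCommGroup V] [InnerProductSpace ℝ V]

namespace CurvAux

noncomputable def Wsub (n : ℕ) : Submodule ℝ (EuclideanSpace ℝ (Fin n × Fin n)) where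
  carrier := {M | (∀ i j, M (i, j) = M (j, i)) ∧ ∑ i, M (i, i) = 0}
  add_mem' := by
    rintro M N ⟨hM1, hM2⟩ ⟨hN1, hN2⟩
    exact ⟨fun i j => by simp [hM1 i j, hN1 i j], by simp [Finset.sum_add_distrib, hM2, hN2]⟩
  zero_mem' := ⟨fun i j => rfl, by simp⟩
  smul_mem' := by
    rintro c M ⟨hM1, hM2⟩
    exact ⟨fun i j => by simp [hM1 i j], by simp [← Finset.mul_sum, hM2]⟩

noncomputable def trL (n : ℕ) : (Sym2 (Fin n) → ℝ) →ₗ[ℝ] ℝ where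
  toFun f := ∑ i : Fin n, f s(i, i)
  map_add' f g := by simp [Finset.sum_add_distrib]
  map_smul' c f := by simp [Finset.mul_sum]

noncomputable def WequivKer (n : ℕ) : Wsub n ≃ₗ[ℝ] LinearMap.ker (trL n) where
  toFun M := ⟨Sym2.lift ⟨fun i j => (M : EuclideanSpace ℝ (Fin n × Fin n)) (i, j),
      fun i j => M.2.1 i j⟩, by
    simp only [LinearMap.mem_ker, trL, LinearMap.coe_mk, AddHom.coe_mk, Sym2.lift_mk]
    exact M.2.2⟩
  map_add' M N := by
    ext s
    induction s using Sym2.ind with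
    | _ i j => simp [Sym2.lift_mk]
  map_smul' c M := by
    ext s
    induction s using Sym2.ind with
    | _ i j => simp [Sym2.lift_mk]
  invFun f := ⟨WithLp.toLp 2 (fun p => f.1 s(p.1, p.2) : Fin n × Fin n → ℝ), by
    refine ⟨fun i j => ?_, f.2⟩
    show f.1 s(i, j) = f.1 s(j, i)
    rw [Sym2.eq_swap]⟩
  left_inv M := by
    ext p
    obtain ⟨i, j⟩ := p
    exact Sym2.lift_mk _ i j
  right_inv f := by
    ext s
    induction s using Sym2.ind with
    | _ i j => simp [Sym2.lift_mk]

theorem finrank_Wsub (n : ℕ) (hn : 4 ≤ n) :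
    Module.finrank ℝ (Wsub n) = (n - 1) * (n + 2) / 2 := by
  have h1 : Module.finrank ℝ (Wsub n) = Module.finrank ℝ (LinearMap.ker (trL n)) :=
    (WequivKer n).finrank_eq
  have hsurj : Function.Surjective (trL n) := by
    intro c
    have h0 : (0 : ℕ) < n := by omega
    refine ⟨fun s' => if s' = s((⟨0, h0⟩ : Fin n), (⟨0, h0⟩ : Fin n)) then c else 0, ?_⟩
    simp only [trL, LinearMap.coe_mk, AddHom.coe_mk, Sym2.eq_iff]
    simp [Finset.sum_ite_eq]
  have h2 : Module.finrank ℝ (LinearMap.range (trL n)) + Module.finrank ℝ (LinearMap.ker (trL n))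
      = Module.finrank ℝ (Sym2 (Fin n) → ℝ) := LinearMap.finrank_range_add_finrank_ker _
  rw [LinearMap.range_eq_top.mpr hsurj, finrank_top] at h2
  have h3 : Module.finrank ℝ (Sym2 (Fin n) → ℝ) = n * (n + 1) / 2 := by
    rw [Module.finrank_fintype_fun_eq_card, Sym2.card]
    simp [Nat.choose_two_right, Fintype.card_fin, Nat.mul_comm]
  have h4 : Module.finrank ℝ ℝ = 1 := Module.finrank_self ℝ
  have key : (n - 1) * (n + 2) + 2 = n * (n + 1) := by
    obtain ⟨p, rfl⟩ : ∃ p, n = p + 1 := ⟨n - 1, by omega⟩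
    simp only [Nat.add_sub_cancel]
    ring
  obtain ⟨m, hm⟩ := Nat.even_mul_succ_self n
  omega


noncomputable def dlt {n : ℕ} (a b : Fin n) : ℝ := if a = b then 1 else 0

theorem dlt_comm {n : ℕ} (a b : Fin n) : dlt a b = dlt b a := by
  simp [dlt, eq_comm]

noncomputable def Q (n : ℕ) (i l : Fin n) : EuclideanSpace ℝ (Fin n × Fin n) :=
  WithLp.toLp 2 (fun p => (dlt p.1 i * dlt p.2 l + dlt p.1 l * dlt p.2 i) / 2
    - (if i = l then 1 / (n : ℝ) else 0) * dlt p.1 p.2 : Fin n × Fin n → ℝ)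

theorem Q_apply (n : ℕ) (i l a c : Fin n) :
    Q n i l (a, c) = (dlt a i * dlt c l + dlt a l * dlt c i) / 2
      - (if i = l then 1 / (n : ℝ) else 0) * dlt a c := rfl

theorem sum_dlt_mul {n : ℕ} (i : Fin n) (f : Fin n → ℝ) :
    ∑ a, dlt a i * f a = f i := by
  simp [dlt, ite_mul]

theorem sum_dlt_mul' {n : ℕ} (i : Fin n) (f : Fin n → ℝ) :
    ∑ a, f a * dlt a i = f i := by
  simp [dlt, mul_ite]

theorem Q_mem (n : ℕ) (hn : 0 < n) (i l : Fin n) : Q n i l ∈ Wsub n := by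
  constructor
  · intro a c
    rw [Q_apply, Q_apply, dlt_comm a c]
    rw [show dlt c i * dlt a l = dlt a l * dlt c i from mul_comm _ _,
      show dlt c l * dlt a i = dlt a i * dlt c l from mul_comm _ _]
    ring_nf
  · have h1 : ∀ j : Fin n, Q n i l (j, j) =
        dlt j i * dlt j l - (if i = l then 1 / (n : ℝ) else 0) := by
      intro j
      rw [Q_apply]
      simp only [dlt]
      split_ifs <;> norm_num
    simp_rw [h1]
    rw [Finset.sum_sub_distrib]
    rw [sum_dlt_mul i (fun a => dlt a l)]
    simp only [dlt, Finset.sum_const, Finset.card_univ, Fintype.card_fin, nsmul_eq_mul]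
    rcases eq_or_ne i l with h | h
    · rw [if_pos h, if_pos h, mul_one_div, div_self (by exact_mod_cast hn.ne')]
      ring
    · simp [h]

theorem Q_inner {n : ℕ} (i l : Fin n) (M : EuclideanSpace ℝ (Fin n × Fin n))
    (hM : M ∈ Wsub n) : ∑ p : Fin n × Fin n, Q n i l p * M p = M (i, l) := by
  obtain ⟨hsym, htr⟩ := hM
  have split : ∀ a c, Q n i l (a, c) * M (a, c) =
      (dlt a i * (dlt c l * M (a, c)) + dlt a l * (dlt c i * M (a, c))) / 2
        - (if i = l then 1 / (n : ℝ) else 0) * (dlt a c * M (a, c)) := by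
    intro a c; rw [Q_apply]; ring
  rw [Fintype.sum_prod_type]
  simp_rw [split]
  rw [show (fun a => ∑ c, ((dlt a i * (dlt c l * M (a, c)) + dlt a l * (dlt c i * M (a, c))) / 2
        - (if i = l then 1 / (n : ℝ) else 0) * (dlt a c * M (a, c)))) = fun a =>
      ((∑ c, dlt c l * M (a, c)) * dlt a i + (∑ c, dlt c i * M (a, c)) * dlt a l) / 2
        - (if i = l then 1 / (n : ℝ) else 0) * (dlt a a * M (a, a)) from funext fun a => ?_]
  · rw [Finset.sum_sub_distrib, ← Finset.sum_div, Finset.sum_add_distrib, sum_dlt_mul', sum_dlt_mul']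
    rw [sum_dlt_mul l (fun c => M (i, c)), sum_dlt_mul i (fun c => M (l, c))]
    have h3 : ∀ x : Fin n, (if i = l then 1 / (n : ℝ) else 0) * (dlt x x * M (x, x))
        = (if i = l then 1 / (n : ℝ) else 0) * M (x, x) := by intro x; simp [dlt]
    simp_rw [h3]
    rw [← Finset.mul_sum, htr, mul_zero, hsym l i]
    ring
  · -- per-a identity
    rw [Finset.sum_sub_distrib, ← Finset.sum_div, Finset.sum_add_distrib, ← Finset.mul_sum,
      ← Finset.mul_sum, ← Finset.mul_sum]
    have hc : ∑ x, dlt a x * M (a, x) = dlt a a * M (a, a) := by simp [dlt, ite_mul]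
    rw [hc]
    ring


theorem inner_eq_sum {n : ℕ} (x y : EuclideanSpace ℝ (Fin n × Fin n)) :
    (inner ℝ x y : ℝ) = ∑ p, x p * y p := by
  simp [PiLp.inner_apply, RCLike.inner_apply, mul_comm]

theorem sum_dlt_mul2 {n : ℕ} (i : Fin n) (f : Fin n → ℝ) :
    ∑ a, f a * dlt i a = f i := by
  simp [dlt, mul_ite]

theorem final {n : ℕ} (hn0 : 0 < n)
    (R' : Fin n → Fin n → Fin n → Fin n → ℝ)
    (hanti : ∀ i j k' l, R' i j k' l = - R' j i k' l) :
    ∑ i, ∑ j, ∑ k', ∑ l, R' i j k' l * Q n j k' (i, l)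
      = (1 / 2 + 1 / (n : ℝ)) * ∑ i, ∑ j, R' i j i j := by
  have hzero : ∀ i l, R' i i l l = 0 := fun i l => by have := hanti i i l l; linarith
  have expand : ∀ i j k l, R' i j k l * Q n j k (i, l)
      = (R' i j k l / 2 * dlt i j) * dlt l k + (R' i j k l / 2 * dlt l j) * dlt i k
        - (R' i j k l * (if j = k then 1 / (n : ℝ) else 0)) * dlt i l := by
    intro i j k l
    rw [Q_apply]
    ring
  simp_rw [expand]
  simp_rw [Finset.sum_sub_distrib]
  simp_rw [Finset.sum_add_distrib]
  have Ta : ∑ i, ∑ j, ∑ k, ∑ l, (R' i j k l / 2 * dlt i j) * dlt l k = 0 := by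
    have h1 : ∀ i j k : Fin n, ∑ l, (R' i j k l / 2 * dlt i j) * dlt l k
        = R' i j k k / 2 * dlt i j := fun i j k => sum_dlt_mul' k _
    simp_rw [h1]
    have h2 : ∀ i : Fin n, ∑ j, ∑ k, R' i j k k / 2 * dlt i j
        = ∑ k, R' i i k k / 2 := by
      intro i
      have h3 : ∀ j : Fin n, ∑ k, R' i j k k / 2 * dlt i j
          = (∑ k, R' i j k k / 2) * dlt i j := fun j => (Finset.sum_mul _ _ _).symm
      simp_rw [h3]
      exact sum_dlt_mul2 i _
    simp_rw [h2, hzero]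
    simp
  have Tb : ∑ i, ∑ j, ∑ k, ∑ l, (R' i j k l / 2 * dlt l j) * dlt i k
      = (∑ i, ∑ j, R' i j i j) / 2 := by
    have h1 : ∀ i j k : Fin n, ∑ l, (R' i j k l / 2 * dlt l j) * dlt i k
        = (R' i j k j / 2) * dlt i k := by
      intro i j k
      rw [← Finset.sum_mul]
      congr 1
      exact sum_dlt_mul' _ _
    simp_rw [h1]
    have h2 : ∀ i j : Fin n, ∑ k, (R' i j k j / 2) * dlt i k = R' i j i j / 2 :=
      fun i j => sum_dlt_mul2 i _
    simp_rw [h2]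
    rw [Finset.sum_div]
    exact Finset.sum_congr rfl fun i _ => (Finset.sum_div _ _ _).symm
  have Tc : ∑ i, ∑ j, ∑ k, ∑ l, (R' i j k l * (if j = k then 1 / (n : ℝ) else 0)) * dlt i l
      = -(1 / (n : ℝ)) * ∑ i, ∑ j, R' i j i j := by
    have h1 : ∀ i j k : Fin n, ∑ l, (R' i j k l * (if j = k then 1 / (n : ℝ) else 0)) * dlt i l
        = R' i j k i * (if j = k then 1 / (n : ℝ) else 0) := fun i j k => sum_dlt_mul2 i _
    simp_rw [h1]
    have h2 : ∀ i j k : Fin n, R' i j k i * (if j = k then 1 / (n : ℝ) else 0)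
        = (R' i j k i * (1 / (n : ℝ))) * dlt j k := by
      intro i j k
      unfold dlt
      split_ifs <;> ring
    simp_rw [h2]
    have h3 : ∀ i j : Fin n, ∑ k, (R' i j k i * (1 / (n : ℝ))) * dlt j k
        = R' i j j i * (1 / (n : ℝ)) := fun i j => sum_dlt_mul2 j _
    simp_rw [h3]
    calc ∑ i, ∑ j, R' i j j i * (1 / (n : ℝ))
        = ∑ i, ∑ j, (-(1 / (n : ℝ))) * R' j i j i := by
          refine Finset.sum_congr rfl fun i _ => Finset.sum_congr rfl fun j _ => ?_
          rw [hanti i j j i]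
          ring
      _ = ∑ j, ∑ i, (-(1 / (n : ℝ))) * R' j i j i := Finset.sum_comm
      _ = -(1 / (n : ℝ)) * ∑ i, ∑ j, R' i j i j := by
          rw [Finset.mul_sum]
          exact Finset.sum_congr rfl fun i _ => (Finset.mul_sum _ _ _).symm
  rw [Ta, Tb, Tc]
  ring

theorem key {n k : ℕ} (hn : 4 ≤ n) (hk : k = (n - 1) * (n + 2) / 2)
    (u : Fin k → EuclideanSpace ℝ (Fin n × Fin n))
    (hmem : ∀ a, u a ∈ Wsub n)
    (horth : ∀ a a', (∑ p : Fin n × Fin n, u a p * u a' p) = if a = a' then 1 else 0)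
    (R' : Fin n → Fin n → Fin n → Fin n → ℝ)
    (hanti : ∀ i j k' l, R' i j k' l = - R' j i k' l) :
    ∑ a, ∑ i, ∑ j, ∑ k', ∑ l, R' i j k' l * u a (i, l) * u a (j, k')
      = (1 / 2 + 1 / (n : ℝ)) * ∑ i, ∑ j, R' i j i j := by
  have hn0 : 0 < n := by omega
  set u' : Fin k → Wsub n := fun a => ⟨u a, hmem a⟩ with hu'
  have honu : Orthonormal ℝ u' := by
    rw [orthonormal_iff_ite]
    intro a a'
    rw [Submodule.coe_inner, inner_eq_sum]
    exact_mod_cast horth a a'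
  have hkpos : 0 < k := by
    have h1 : 3 ≤ n - 1 := by omega
    have h2 : 6 ≤ n + 2 := by omega
    have := Nat.mul_le_mul h1 h2
    omega
  haveI : Nonempty (Fin k) := ⟨⟨0, hkpos⟩⟩
  have card_eq : Fintype.card (Fin k) = Module.finrank ℝ (Wsub n) := by
    rw [Fintype.card_fin, finrank_Wsub n hn, hk]
  let bW := basisOfLinearIndependentOfCardEqFinrank honu.linearIndependent card_eq
  have hbW : ⇑bW = u' := coe_basisOfLinearIndependentOfCardEqFinrank _ _
  let B := bW.toOrthonormalBasis (by rwa [hbW])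
  have hB : ⇑B = u' := by
    rw [Module.Basis.coe_toOrthonormalBasis, hbW]
  have hpt : ∀ i j k' l : Fin n, ∑ a, u a (i, l) * u a (j, k') = Q n j k' (i, l) := by
    intro i j k' l
    have hq1 := Q_mem n hn0 i l
    have hq2 := Q_mem n hn0 j k'
    set x : Wsub n := ⟨Q n i l, hq1⟩ with hx
    set y : Wsub n := ⟨Q n j k', hq2⟩ with hy
    have hpar := B.sum_inner_mul_inner x y
    have e1 : ∀ a, (inner ℝ x (B a) : ℝ) = u a (i, l) := by
      intro a
      rw [Submodule.coe_inner]
      simp only [hB]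
      rw [inner_eq_sum]
      exact Q_inner i l (u a) (hmem a)
    have e2 : ∀ a, (inner ℝ (B a) y : ℝ) = u a (j, k') := by
      intro a
      rw [Submodule.coe_inner]
      simp only [hB]
      rw [inner_eq_sum]
      rw [show ∑ p, (u' a : EuclideanSpace ℝ (Fin n × Fin n)) p * (y : EuclideanSpace ℝ (Fin n × Fin n)) p
        = ∑ p, (y : EuclideanSpace ℝ (Fin n × Fin n)) p * (u' a : EuclideanSpace ℝ (Fin n × Fin n)) p
        from Finset.sum_congr rfl fun p _ => mul_comm _ _]
      exact Q_inner j k' (u a) (hmem a)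
    calc ∑ a, u a (i, l) * u a (j, k')
        = ∑ a, (inner ℝ x (B a) : ℝ) * (inner ℝ (B a) y : ℝ) :=
          Finset.sum_congr rfl fun a _ => by rw [e1, e2]
      _ = (inner ℝ x y : ℝ) := hpar
      _ = Q n j k' (i, l) := by
          rw [Submodule.coe_inner, inner_eq_sum]
          exact Q_inner i l (Q n j k') hq2
  have step : ∑ a, ∑ i, ∑ j, ∑ k', ∑ l, R' i j k' l * u a (i, l) * u a (j, k')
      = ∑ i, ∑ j, ∑ k', ∑ l, R' i j k' l * Q n j k' (i, l) := by
    rw [Finset.sum_comm]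
    refine Finset.sum_congr rfl fun i _ => ?_
    rw [Finset.sum_comm]
    refine Finset.sum_congr rfl fun j _ => ?_
    rw [Finset.sum_comm]
    refine Finset.sum_congr rfl fun k' _ => ?_
    rw [Finset.sum_comm]
    refine Finset.sum_congr rfl fun l _ => ?_
    simp_rw [mul_assoc, ← Finset.mul_sum]
    rw [hpt]
  rw [step]
  exact final hn0 R' hanti


variable {V : Type*} [NormedAddCommGroup V] [InnerProductSpace ℝ V]

noncomputable def formOfMatrix {n : ℕ} (b : OrthonormalBasis (Fin n) ℝ V)
    (M : EuclideanSpace ℝ (Fin n × Fin n)) : V →ₗ[ℝ] V →ₗ[ℝ] ℝ :=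
  ∑ p : Fin n × Fin n, M p • ((innerₗ V (b p.1)).smulRight (innerₗ V (b p.2)))

theorem formOfMatrix_apply {n : ℕ} (b : OrthonormalBasis (Fin n) ℝ V)
    (M : EuclideanSpace ℝ (Fin n × Fin n)) (x y : V) :
    formOfMatrix b M x y = ∑ p : Fin n × Fin n,
      M p * ((inner ℝ (b p.1) x : ℝ) * (inner ℝ (b p.2) y : ℝ)) := by
  simp [formOfMatrix, LinearMap.sum_apply, LinearMap.smulRight_apply, smul_eq_mul,
    mul_assoc]

theorem formOfMatrix_basis {n : ℕ} (b : OrthonormalBasis (Fin n) ℝ V)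
    (M : EuclideanSpace ℝ (Fin n × Fin n)) (i j : Fin n) :
    formOfMatrix b M (b i) (b j) = M (i, j) := by
  rw [formOfMatrix_apply, Fintype.sum_prod_type]
  have hb := orthonormal_iff_ite.mp b.orthonormal
  simp_rw [hb]
  simp [Finset.sum_ite_eq, Finset.sum_ite_eq', mul_ite, ite_mul]

theorem formOfMatrix_symm {n : ℕ} (b : OrthonormalBasis (Fin n) ℝ V)
    (M : EuclideanSpace ℝ (Fin n × Fin n)) (hM : ∀ i j, M (i, j) = M (j, i)) (x y : V) :
    formOfMatrix b M x y = formOfMatrix b M y x := by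
  rw [formOfMatrix_apply, formOfMatrix_apply]
  refine Fintype.sum_equiv (Equiv.prodComm (Fin n) (Fin n)) _ _ ?_
  rintro ⟨i, j⟩
  simp only [Equiv.prodComm_apply, Prod.swap_prod_mk]
  rw [show M (i, j) = M (j, i) from hM i j]
  ring

end CurvAux


theorem stmt_6 {n : ℕ} (hn : 4 ≤ n)
    (b : OrthonormalBasis (Fin n) ℝ V)
    (R : V →ₗ[ℝ] V →ₗ[ℝ] V →ₗ[ℝ] V →ₗ[ℝ] ℝ)
    (hR : IsAlgCurvatureTensor R) :
    kNonnegSecondKind b R ((n - 1) * (n + 2) / 2) ↔ 0 ≤ scalarCurv b R := by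

  have hn0 : 0 < n := by omega
  constructor
  · intro h
    let B := (stdOrthonormalBasis ℝ (CurvAux.Wsub n)).reindex
      (finCongr (CurvAux.finrank_Wsub n hn))
    set u : Fin ((n - 1) * (n + 2) / 2) → EuclideanSpace ℝ (Fin n × Fin n) :=
      fun a => (B a : EuclideanSpace ℝ (Fin n × Fin n)) with hu
    have hmem : ∀ a, u a ∈ CurvAux.Wsub n := fun a => (B a).2
    have horthu : ∀ a a', (∑ p : Fin n × Fin n, u a p * u a' p) = if a = a' then 1 else 0 := by
      intro a a'
      have hoB := orthonormal_iff_ite.mp B.orthonormal a a'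
      rw [Submodule.coe_inner, CurvAux.inner_eq_sum] at hoB
      exact_mod_cast hoB
    set φ : Fin ((n - 1) * (n + 2) / 2) → (V →ₗ[ℝ] V →ₗ[ℝ] ℝ) :=
      fun a => CurvAux.formOfMatrix b (u a) with hφ
    have hφb : ∀ a i j, φ a (b i) (b j) = u a (i, j) :=
      fun a i j => CurvAux.formOfMatrix_basis b (u a) i j
    have htra : ∀ a, IsTracelessSymForm b (φ a) := by
      intro a
      refine ⟨CurvAux.formOfMatrix_symm b (u a) (hmem a).1, ?_⟩
      rw [Finset.sum_congr rfl fun i _ => hφb a i i]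
      exact (hmem a).2
    have horth : ∀ a a', formInner b (φ a) (φ a') = if a = a' then 1 else 0 := by
      intro a a'
      have h1 := horthu a a'
      rw [Fintype.sum_prod_type] at h1
      calc formInner b (φ a) (φ a')
          = ∑ i, ∑ j, u a (i, j) * u a' (i, j) := by
            unfold formInner
            exact Finset.sum_congr rfl fun i _ => Finset.sum_congr rfl fun j _ => by
              rw [hφb a i j, hφb a' i j]
        _ = if a = a' then 1 else 0 := h1
    have hkey := CurvAux.key hn rfl u hmem horthu
      (fun i j k l => R (b i) (b j) (b k) (b l))
      (fun i j k l => hR.1 (b i) (b j) (b k) (b l))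
    have hsum : ∑ a, secondKind b R (φ a) (φ a)
        = (1 / 2 + 1 / (n : ℝ)) * scalarCurv b R := by
      show ∑ a, secondKind b R (φ a) (φ a)
        = (1 / 2 + 1 / (n : ℝ)) * ∑ i, ∑ j, R (b i) (b j) (b i) (b j)
      rw [← hkey]
      refine Finset.sum_congr rfl fun a _ => ?_
      unfold secondKind
      refine Finset.sum_congr rfl fun i _ => Finset.sum_congr rfl fun j _ =>
        Finset.sum_congr rfl fun k _ => Finset.sum_congr rfl fun l _ => by
          rw [hφb a i l, hφb a j k]
    have h0 := h φ htra horth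
    rw [hsum] at h0
    have hc : (0 : ℝ) < 1 / 2 + 1 / (n : ℝ) := by positivity
    nlinarith [h0, hc]
  · intro hS φ htra horth
    set u : Fin ((n - 1) * (n + 2) / 2) → EuclideanSpace ℝ (Fin n × Fin n) :=
      fun a => WithLp.toLp 2 (fun p => φ a (b p.1) (b p.2) : Fin n × Fin n → ℝ) with hu
    have hmem : ∀ a, u a ∈ CurvAux.Wsub n :=
      fun a => ⟨fun i j => (htra a).1 (b i) (b j), (htra a).2⟩
    have horthu : ∀ a a', (∑ p : Fin n × Fin n, u a p * u a' p) = if a = a' then 1 else 0 := by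
      intro a a'
      rw [Fintype.sum_prod_type]
      have h1 := horth a a'
      unfold formInner at h1
      exact h1
    have hkey := CurvAux.key hn rfl u hmem horthu
      (fun i j k l => R (b i) (b j) (b k) (b l))
      (fun i j k l => hR.1 (b i) (b j) (b k) (b l))
    have hsum : ∑ a, secondKind b R (φ a) (φ a)
        = (1 / 2 + 1 / (n : ℝ)) * scalarCurv b R := by
      show ∑ a, secondKind b R (φ a) (φ a)
        = (1 / 2 + 1 / (n : ℝ)) * ∑ i, ∑ j, R (b i) (b j) (b i) (b j)
      rw [← hkey]
      rfl
    rw [hsum]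
    have hc : (0 : ℝ) ≤ 1 / 2 + 1 / (n : ℝ) := by positivity
    exact mul_nonneg hc hS
end
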